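/- arXiv:1906.11689 — 7 statements merged into one kernel-verified Lean document; each statement's English description precedes it below -/
import Mathlib

section
/- If H is a verbally closed subgroup of a group G, then H ∩ G' = H', where G' and H' denote the derived (commutator) subgroups. Consequently H/H' is isomorphic to HG'/G'. -/
/-- `H` is a retract of `G`: some endomorphism of `G` with image in `H` fixes `H` pointwise. -/
def IsRetract {G : Type*} [Group G] (H : Subgroup G) : Prop :=
  ∃ ρ : G →* G, (∀ g, ρ g ∈ H) ∧ ∀ h ∈ H, ρ h = h

/-- Evaluation of a word with constants in `H` at an assignment `g` of the variables. -/
def wordEval {G : Type*} [Group G] {n : ℕ} (H : Subgroup G)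
    (w : FreeGroup (Fin n ⊕ H)) (g : Fin n → G) : G :=
  FreeGroup.lift (Sum.elim g (fun h : H => (h : G))) w

/-- `H` is algebraically closed in `G`: every finite system of equations with constants
in `H` that has a solution in `G` has a solution in `H`. -/
def IsAlgClosedSubgroup {G : Type*} [Group G] (H : Subgroup G) : Prop :=
  ∀ (n m : ℕ) (w : Fin m → FreeGroup (Fin n ⊕ H)) (h : Fin m → H),
    (∃ g : Fin n → G, ∀ i, wordEval H (w i) g = h i) →
    ∃ g : Fin n → G, (∀ j, g j ∈ H) ∧ ∀ i, wordEval H (w i) g = h i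

/-- `H` is verbally closed in `G`: every split equation `w(x₁,…,xₙ) = h`, `h ∈ H`,
solvable in `G` is solvable in `H`. -/
def IsVerballyClosed {G : Type*} [Group G] (H : Subgroup G) : Prop :=
  ∀ (n : ℕ) (w : FreeGroup (Fin n)) (h : G), h ∈ H →
    (∃ g : Fin n → G, FreeGroup.lift g w = h) →
    ∃ g : Fin n → G, (∀ j, g j ∈ H) ∧ FreeGroup.lift g w = h

/-- `H` is `l`-verbally closed in `G`: every system of `l` split equations with right-hand
sides in `H` that is solvable in `G` is solvable in `H`. -/
def IsLVerballyClosed {G : Type*} [Group G] (H : Subgroup G) (l : ℕ) : Prop :=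
  ∀ (n : ℕ) (w : Fin l → FreeGroup (Fin n)) (h : Fin l → G), (∀ i, h i ∈ H) →
    (∃ g : Fin n → G, ∀ i, FreeGroup.lift g (w i) = h i) →
    ∃ g : Fin n → G, (∀ j, g j ∈ H) ∧ ∀ i, FreeGroup.lift g (w i) = h i

open scoped commutatorElement

private lemma lift_map_aux {α β : Type*} {G : Type*} [Group G] (f : α → β) (g : β → G)
    (w : FreeGroup α) : FreeGroup.lift g (FreeGroup.map f w) = FreeGroup.lift (g ∘ f) w := by
  have : (FreeGroup.lift g).comp (FreeGroup.map f) = FreeGroup.lift (g ∘ f) :=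
    FreeGroup.ext_hom _ _ (by simp)
  simpa using congrFun (congrArg DFunLike.coe this) w

private lemma exists_word (G : Type*) [Group G] :
    ∀ L : List (G × G), ∃ n : ℕ, ∃ w : FreeGroup (Fin n),
      (∀ (K : Subgroup G) (g : Fin n → G), (∀ j, g j ∈ K) → FreeGroup.lift g w ∈ ⁅K, K⁆) ∧
      ∃ g : Fin n → G, FreeGroup.lift g w = (L.map fun p => ⁅p.1, p.2⁆).prod
  | [] => ⟨0, 1, fun K g _ => by simp [one_mem], fun _ => 1, by simp⟩
  | (a, b) :: L => by
    obtain ⟨n, w, hmem, g0, hg0⟩ := exists_word G L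
    refine ⟨n + 2, ⁅FreeGroup.of (0 : Fin (n + 2)), FreeGroup.of 1⁆ *
      FreeGroup.map (fun j : Fin n => j.succ.succ) w, ?_, ?_⟩
    · intro K g hg
      rw [map_mul, lift_map_aux, map_commutatorElement]
      refine mul_mem (Subgroup.commutator_mem_commutator ?_ ?_)
        (hmem K _ fun j => hg _) <;> simp [hg]
    · refine ⟨Fin.cons a (Fin.cons b g0), ?_⟩
      have hc : (Fin.cons a (Fin.cons b g0) : Fin (n + 2) → G) ∘
          (fun j : Fin n => j.succ.succ) = g0 := funext fun j => by simp
      have h1 : (1 : Fin (n + 2)) = (0 : Fin (n + 1)).succ := rfl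
      rw [map_mul, lift_map_aux, hc, hg0, map_commutatorElement]
      simp only [FreeGroup.lift_apply_of]
      rw [h1, Fin.cons_zero, Fin.cons_succ, Fin.cons_zero, List.map_cons, List.prod_cons]

private lemma prod_swap_inv {G : Type*} [Group G] :
    ∀ L : List (G × G), ((L.reverse.map Prod.swap).map fun p => ⁅p.1, p.2⁆).prod =
      ((L.map fun p => ⁅p.1, p.2⁆).prod)⁻¹
  | [] => by simp
  | p :: L => by
    rw [List.reverse_cons, List.map_append, List.map_append, List.prod_append,
      prod_swap_inv L, List.map_cons, List.map_cons, List.map_nil, List.prod_cons,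
      List.map_cons, List.prod_cons, mul_inv_rev]
    simp [commutatorElement_inv]

private lemma mem_commutator_exists_list {G : Type*} [Group G] {x : G}
    (hx : x ∈ commutator G) :
    ∃ L : List (G × G), (L.map fun p => ⁅p.1, p.2⁆).prod = x := by
  rw [commutator_eq_closure] at hx
  induction hx using Subgroup.closure_induction with
  | mem x hx => obtain ⟨a, b, rfl⟩ := hx; exact ⟨[(a, b)], by simp⟩
  | one => exact ⟨[], by simp⟩
  | mul x y _ _ hx hy =>
      obtain ⟨L1, rfl⟩ := hx; obtain ⟨L2, rfl⟩ := hy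
      exact ⟨L1 ++ L2, by simp⟩
  | inv x _ hx =>
      obtain ⟨L, rfl⟩ := hx
      exact ⟨L.reverse.map Prod.swap, prod_swap_inv L⟩

/-- If `H` is verbally closed in `G`, then `H ⊓ G' = H'`; consequently
`H/H'` is isomorphic to `HG'/G'` (the image of `H` in the abelianization of `G`). -/
theorem verballyClosed_inf_commutator {G : Type*} [Group G] (H : Subgroup G)
    (hH : IsVerballyClosed H) :
    H ⊓ commutator G = ⁅H, H⁆ ∧
      Nonempty (Abelianization ↥H ≃*
        ↥(H.map (Abelianization.of : G →* Abelianization G))) := by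
  have key : H ⊓ commutator G = ⁅H, H⁆ := by
    apply le_antisymm
    · rintro x ⟨hxH, hxC⟩
      obtain ⟨L, hL⟩ := mem_commutator_exists_list hxC
      obtain ⟨n, w, hmem, g, hg⟩ := exists_word G L
      obtain ⟨g', hg'H, hg'⟩ := hH n w x hxH ⟨g, by rw [hg, hL]⟩
      exact hg' ▸ hmem H g' hg'H
    · refine le_inf (Subgroup.commutator_le.mpr fun a ha b hb => ?_)
        (commutator_def G ▸ Subgroup.commutator_mono le_top le_top)
      exact mul_mem (mul_mem (mul_mem ha hb) (inv_mem ha)) (inv_mem hb)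
  refine ⟨key, ?_⟩
  set φ : ↥H →* Abelianization G := Abelianization.of.comp H.subtype with hφ
  have hmapc : (commutator ↥H).map H.subtype = ⁅H, H⁆ := by
    rw [commutator_def, Subgroup.map_commutator]
    congr 1 <;>
      rw [← MonoidHom.range_eq_map, Subgroup.range_subtype]
  have hker : φ.ker = commutator ↥H := by
    ext x
    have h1 : x ∈ φ.ker ↔ (x : G) ∈ commutator G := by
      rw [MonoidHom.mem_ker]
      exact QuotientGroup.eq_one_iff _
    have h2 : (x : G) ∈ commutator G ↔ (x : G) ∈ ⁅H, H⁆ := by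
      rw [← key]; simp [x.2]
    have h3 : (x : G) ∈ ⁅H, H⁆ ↔ x ∈ commutator ↥H := by
      rw [← hmapc, Subgroup.mem_map]
      constructor
      · rintro ⟨y, hy, hyx⟩
        rwa [show y = x from Subtype.ext hyx] at hy
      · exact fun hx => ⟨x, hx, rfl⟩
    rw [h1, h2, h3]
  have hrange : φ.range = H.map (Abelianization.of : G →* Abelianization G) := by
    rw [hφ, MonoidHom.range_comp, Subgroup.range_subtype]
  exact ⟨(QuotientGroup.quotientMulEquivOfEq hker.symm).trans
    ((QuotientGroup.quotientKerEquivRange φ).trans (MulEquiv.subgroupCongr hrange))⟩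
end

section
/- Let F_2 be the free group of rank 2 with basis {f_1, f_2}. The element g = f_1 f_2^{-1} f_1^{-1} f_2 f_1 generates a cyclic subgroup that is a retract of F_2, but this cyclic subgroup is not a free factor of F_2. -/
/-- `H` is a free factor of `G`: `G` decomposes as a free product `H ∗ K`. -/
def IsFreeFactor {G : Type*} [Group G] (H : Subgroup G) : Prop :=
  ∃ K : Subgroup G, Function.Bijective (Monoid.Coprod.lift H.subtype K.subtype)

/-- Precomposition with a `MulEquiv` as an `Equiv` of hom spaces. -/
def homCongrAux {A B Q : Type*} [Group A] [Group B] [Group Q] (e : A ≃* B) :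
    (B →* Q) ≃ (A →* Q) where
  toFun φ := φ.comp e.toMonoidHom
  invFun ψ := ψ.comp e.symm.toMonoidHom
  left_inv φ := by ext a; simp
  right_inv ψ := by ext b; simp

/-- In `F₂` with basis `f₁, f₂`, the element `g = f₁ f₂⁻¹ f₁⁻¹ f₂ f₁` generates a
cyclic subgroup that is a retract but not a free factor of `F₂`. -/
theorem retract_not_freeFactor :
    let f : Fin 2 → FreeGroup (Fin 2) := FreeGroup.of
    let g : FreeGroup (Fin 2) := f 0 * (f 1)⁻¹ * (f 0)⁻¹ * f 1 * f 0
    IsRetract (Subgroup.zpowers g) ∧ ¬ IsFreeFactor (Subgroup.zpowers g) := by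
  intro f g
  constructor
  · -- retract: send f₁ ↦ g, f₂ ↦ 1
    refine ⟨FreeGroup.lift (fun i => if i = 0 then g else 1), ?_, ?_⟩
    · intro x
      induction x using FreeGroup.induction_on with
      | C1 => rw [map_one]; exact Subgroup.one_mem _
      | of i =>
        rw [FreeGroup.lift_apply_of]
        by_cases hi : i = 0
        · rw [if_pos hi]; exact Subgroup.mem_zpowers g
        · rw [if_neg hi]; exact Subgroup.one_mem _
      | inv_of i h => rw [map_inv]; exact Subgroup.inv_mem _ h
      | mul x y hx hy => rw [map_mul]; exact Subgroup.mul_mem _ hx hy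
    · intro h hh
      rw [Subgroup.mem_zpowers_iff] at hh
      obtain ⟨k, rfl⟩ := hh
      rw [map_zpow]
      congr 1
      show FreeGroup.lift _ (f 0 * (f 1)⁻¹ * (f 0)⁻¹ * f 1 * f 0) = g
      simp [f]
  · -- not a free factor: hom-counting into D₃
    rintro ⟨K, hbij⟩
    set H : Subgroup (FreeGroup (Fin 2)) := Subgroup.zpowers g with hH
    let e : Monoid.Coprod H K ≃* FreeGroup (Fin 2) :=
      MulEquiv.ofBijective (Monoid.Coprod.lift H.subtype K.subtype) hbij
    -- exponent-sum homomorphism detecting f₁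
    let χ : FreeGroup (Fin 2) →* Multiplicative ℤ :=
      FreeGroup.lift (fun i => if i = 0 then Multiplicative.ofAdd (1 : ℤ) else 1)
    have hχg : χ g = Multiplicative.ofAdd (1 : ℤ) := by
      show χ (f 0 * (f 1)⁻¹ * (f 0)⁻¹ * f 1 * f 0) = _
      simp [χ, f]
    -- H ≅ ℤ
    have hmem : ∀ n : Multiplicative ℤ, zpowersHom _ g n ∈ H := fun n =>
      Subgroup.mem_zpowers_iff.mpr ⟨n.toAdd, rfl⟩
    let ζ : Multiplicative ℤ →* H := MonoidHom.codRestrict (zpowersHom _ g) H hmem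
    have hζ : Function.Bijective ζ := by
      constructor
      · intro m n hmn
        have h1 : g ^ m.toAdd = g ^ n.toAdd := congrArg Subtype.val hmn
        have h2 : χ (g ^ m.toAdd) = χ (g ^ n.toAdd) := congrArg χ h1
        rw [map_zpow, map_zpow, hχg] at h2
        have : Multiplicative.ofAdd m.toAdd = Multiplicative.ofAdd n.toAdd := by
          simpa [← ofAdd_zsmul] using h2
        exact Multiplicative.toAdd.injective (Multiplicative.ofAdd.injective this)
      · rintro ⟨x, hx⟩
        rw [Subgroup.mem_zpowers_iff] at hx
        obtain ⟨k, hk⟩ := hx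
        exact ⟨Multiplicative.ofAdd k, Subtype.ext (by exact hk)⟩
    let eH : Multiplicative ℤ ≃* H := MulEquiv.ofBijective ζ hζ
    set Q := DihedralGroup 3 with hQ
    -- card of hom spaces
    have hcard2 : Nat.card (FreeGroup (Fin 2) →* Q) = 36 := by
      rw [Nat.card_congr (FreeGroup.lift : (Fin 2 → Q) ≃ _).symm,
        Nat.card_eq_fintype_card]
      decide
    have hcardH : Nat.card (H →* Q) = 6 := by
      rw [Nat.card_congr (homCongrAux eH), Nat.card_congr (zpowersHom Q).symm,
        Nat.card_eq_fintype_card]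
      decide
    have hsplit : Nat.card (FreeGroup (Fin 2) →* Q)
        = Nat.card (H →* Q) * Nat.card (K →* Q) := by
      rw [Nat.card_congr (homCongrAux e),
        Nat.card_congr (Monoid.Coprod.liftEquiv :
          ((H →* Q) × (K →* Q)) ≃ _).symm, Nat.card_prod]
    -- solutions of w(A,B)=1 in Q correspond to homs K →* Q
    have key : Nat.card {p : Q × Q // p.1 * p.2⁻¹ * p.1⁻¹ * p.2 * p.1 = 1}
        = Nat.card (K →* Q) := by
      refine Nat.card_congr ?_
      have e0 : {p : Q × Q // p.1 * p.2⁻¹ * p.1⁻¹ * p.2 * p.1 = 1}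
          ≃ {a : Fin 2 → Q // FreeGroup.lift a g = 1} :=
        (finTwoArrowEquiv Q).symm.subtypeEquiv fun p => by
          show _ ↔ (FreeGroup.lift _) (f 0 * (f 1)⁻¹ * (f 0)⁻¹ * f 1 * f 0) = 1
          simp [f, finTwoArrowEquiv]
      have e1 : {p : Q × Q // p.1 * p.2⁻¹ * p.1⁻¹ * p.2 * p.1 = 1}
          ≃ {φ : FreeGroup (Fin 2) →* Q // φ g = 1} :=
        e0.trans ((FreeGroup.lift : (Fin 2 → Q) ≃ _).subtypeEquiv fun a => Iff.rfl)
      have e2 : {φ : FreeGroup (Fin 2) →* Q // φ g = 1}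
          ≃ {ψ : Monoid.Coprod H K →* Q // ψ.comp Monoid.Coprod.inl = 1} := by
        have hinl : ∀ x : H, e (Monoid.Coprod.inl x) = (x : FreeGroup (Fin 2)) :=
          fun x => by simp [e, Monoid.Coprod.lift_apply_inl]
        refine (homCongrAux e).subtypeEquiv fun φ => ?_
        constructor
        · intro hφ
          ext x
          obtain ⟨x, hx⟩ := x
          obtain ⟨k, hk⟩ := Subgroup.mem_zpowers_iff.mp hx
          show φ (e (Monoid.Coprod.inl ⟨x, hx⟩)) = 1
          rw [hinl]
          show φ x = 1
          rw [← hk, map_zpow, hφ, one_zpow]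
        · intro hψ
          have := congrFun (congrArg DFunLike.coe hψ)
            (⟨g, Subgroup.mem_zpowers g⟩ : H)
          change φ (e (Monoid.Coprod.inl (⟨g, Subgroup.mem_zpowers g⟩ : H))) = 1 at this
          rw [hinl] at this
          exact this
      have e3 : {ψ : Monoid.Coprod H K →* Q // ψ.comp Monoid.Coprod.inl = 1}
          ≃ (K →* Q) := by
        refine ⟨fun ψ => ψ.1.comp Monoid.Coprod.inr,
          fun χ' => ⟨Monoid.Coprod.lift 1 χ', Monoid.Coprod.lift_comp_inl 1 χ'⟩,
          ?_, ?_⟩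
        · rintro ⟨ψ, hψ⟩
          refine Subtype.ext (Monoid.Coprod.hom_ext ?_ ?_)
          · rw [Monoid.Coprod.lift_comp_inl, hψ]
          · rw [Monoid.Coprod.lift_comp_inr]
        · intro χ'
          exact Monoid.Coprod.lift_comp_inr 1 χ'
      exact (e1.trans e2).trans e3
    have hsol : Nat.card {p : Q × Q // p.1 * p.2⁻¹ * p.1⁻¹ * p.2 * p.1 = 1} = 12 := by
      rw [Nat.card_eq_fintype_card]
      decide
    rw [hsol] at key
    rw [hcard2, hcardH, ← key] at hsplit
    omega
end

section
/- Let G be a group, N a verbal subgroup of G, and H a verbally closed subgroup of G. Then the image HN/N is a verbally closed subgroup of G/N. -/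
/-- `N` is a verbal subgroup of `G`: it is generated by all values in `G` of some
fixed set of words. -/
def IsVerbalSubgroup {G : Type*} [Group G] (N : Subgroup G) : Prop :=
  ∃ (ι : Type) (n : ι → ℕ) (w : (i : ι) → FreeGroup (Fin (n i))),
    N = Subgroup.closure {x : G | ∃ (i : ι) (g : Fin (n i) → G), FreeGroup.lift g (w i) = x}

private lemma hom_lift' {α : Type*} {G K : Type*} [Group G] [Group K] (φ : G →* K)
    (f : α → G) (x : FreeGroup α) :
    φ (FreeGroup.lift f x) = FreeGroup.lift (φ ∘ f) x := by
  have : φ.comp (FreeGroup.lift f) = FreeGroup.lift (φ ∘ f) := by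
    apply FreeGroup.ext_hom; intro a; simp
  exact DFunLike.congr_fun this x

private lemma lift_map' {α β : Type*} {G : Type*} [Group G] (f : β → G) (φ : α → β)
    (x : FreeGroup α) :
    FreeGroup.lift f (FreeGroup.map φ x) = FreeGroup.lift (f ∘ φ) x := by
  have : (FreeGroup.lift f).comp (FreeGroup.map φ) = FreeGroup.lift (f ∘ φ) := by
    apply FreeGroup.ext_hom; intro a; simp
  exact DFunLike.congr_fun this x

/-- If `N` is a verbal subgroup of `G` and `H` is verbally closed in `G`, then the image
`HN/N` is verbally closed in `G/N`. -/
theorem verballyClosed_map_quotient {G : Type*} [Group G] (N : Subgroup G) [N.Normal]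
    (hN : IsVerbalSubgroup N) (H : Subgroup G) (hH : IsVerballyClosed H) :
    IsVerballyClosed (H.map (QuotientGroup.mk' N)) := by
  intro n w hbar hmem hsol
  obtain ⟨h, hhH, rfl⟩ := hmem
  obtain ⟨gq, hgq⟩ := hsol
  choose g hg using fun j => QuotientGroup.mk'_surjective N (gq j)
  have hpi : QuotientGroup.mk' N (FreeGroup.lift g w) = QuotientGroup.mk' N h := by
    rw [hom_lift']
    have : (QuotientGroup.mk' N) ∘ g = gq := funext hg
    rw [this, hgq]
  rw [QuotientGroup.mk'_eq_mk'] at hpi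
  obtain ⟨m, hmN, hm⟩ := hpi
  obtain ⟨ι, na, wa, hNeq⟩ := hN
  -- m is a value of a word all of whose values lie in N
  have hP : ∃ (k : ℕ) (W : FreeGroup (Fin k)) (g' : Fin k → G),
      FreeGroup.lift g' W = m ∧ ∀ g'' : Fin k → G, FreeGroup.lift g'' W ∈ N := by
    rw [hNeq] at hmN
    refine Subgroup.closure_induction ?_ ?_ ?_ ?_ hmN
    · rintro x ⟨i, gg, hx⟩
      refine ⟨na i, wa i, gg, hx, fun g'' => ?_⟩
      rw [hNeq]
      exact Subgroup.subset_closure ⟨i, g'', rfl⟩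
    · exact ⟨0, 1, Fin.elim0, by simp, fun g'' => by simpa using one_mem N⟩
    · rintro x y - - ⟨k1, W1, g1, e1, a1⟩ ⟨k2, W2, g2, e2, a2⟩
      refine ⟨k1 + k2,
        (FreeGroup.map (Fin.castAdd k2)) W1 * (FreeGroup.map (Fin.natAdd k1)) W2,
        Fin.addCases g1 g2, ?_, fun g'' => ?_⟩
      · have c1 : (Fin.addCases g1 g2 : Fin (k1+k2) → G) ∘ Fin.castAdd k2 = g1 := by
          funext j; simp
        have c2 : (Fin.addCases g1 g2 : Fin (k1+k2) → G) ∘ Fin.natAdd k1 = g2 := by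
          funext j; simp
        rw [map_mul, lift_map', lift_map', c1, c2, e1, e2]
      · rw [map_mul, lift_map', lift_map']
        exact mul_mem (a1 _) (a2 _)
    · rintro x - ⟨k, W, g', e, a⟩
      exact ⟨k, W⁻¹, g', by rw [map_inv, e], fun g'' => by rw [map_inv]; exact inv_mem (a _)⟩
  obtain ⟨k, W, g', hW, hWval⟩ := hP
  set Wb : FreeGroup (Fin (n + k)) :=
    (FreeGroup.map (Fin.castAdd k)) w * (FreeGroup.map (Fin.natAdd n)) W with hWb
  have hbig : ∃ gb : Fin (n + k) → G, FreeGroup.lift gb Wb = h := by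
    refine ⟨Fin.addCases g g', ?_⟩
    have c1 : (Fin.addCases g g' : Fin (n+k) → G) ∘ Fin.castAdd k = g := by funext j; simp
    have c2 : (Fin.addCases g g' : Fin (n+k) → G) ∘ Fin.natAdd n = g' := by funext j; simp
    rw [hWb, map_mul, lift_map', lift_map', c1, c2, hW, hm]
  obtain ⟨g1, hg1H, hg1⟩ := hH (n + k) Wb h hhH hbig
  refine ⟨fun j => QuotientGroup.mk' N (g1 (Fin.castAdd k j)), fun j => ⟨_, hg1H _, rfl⟩, ?_⟩
  have key : FreeGroup.lift (g1 ∘ Fin.castAdd k) w * FreeGroup.lift (g1 ∘ Fin.natAdd n) W = h := by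
    rw [← hg1, hWb, map_mul, lift_map', lift_map']
  have hmemN : FreeGroup.lift (g1 ∘ Fin.natAdd n) W ∈ N := hWval _
  have : FreeGroup.lift (fun j => QuotientGroup.mk' N (g1 (Fin.castAdd k j))) w
      = QuotientGroup.mk' N (FreeGroup.lift (g1 ∘ Fin.castAdd k) w) := by
    rw [hom_lift']; rfl
  rw [this, ← key, map_mul]
  have : QuotientGroup.mk' N (FreeGroup.lift (g1 ∘ Fin.natAdd n) W) = 1 := by
    simpa [QuotientGroup.eq_one_iff] using hmemN
  rw [this, mul_one]
end

section
/- Let G be a group such that G/G' is a free abelian group of finite rank, and let H be a verbally closed subgroup of G. Then the image of H in G/G' is a direct factor of G/G'. -/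
section AuxVC


variable {G : Type*} [Group G]

open scoped commutatorElement

lemma exists_commList {c : G} (hc : c ∈ commutator G) :
    ∃ L : List (G × G), (L.map fun p => ⁅p.1, p.2⁆).prod = c := by
  rw [commutator_eq_closure] at hc
  induction hc using Subgroup.closure_induction with
  | mem x hx => obtain ⟨a, b, rfl⟩ := hx; exact ⟨[(a, b)], by simp⟩
  | one => exact ⟨[], rfl⟩
  | mul x y _ _ hx hy =>
      obtain ⟨L1, rfl⟩ := hx; obtain ⟨L2, rfl⟩ := hy
      exact ⟨L1 ++ L2, by simp⟩
  | inv x _ hx =>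
      obtain ⟨L, rfl⟩ := hx
      refine ⟨L.reverse.map Prod.swap, ?_⟩
      simp only [List.prod_inv_reverse, List.map_reverse, List.map_map]
      have h : ((fun x : G => x⁻¹) ∘ fun p : G × G => ⁅p.1, p.2⁆)
          = (fun p : G × G => ⁅p.1, p.2⁆) ∘ Prod.swap := by
        funext p; simp [Function.comp, commutatorElement_inv]
      rw [h]


lemma key_pow {H : Subgroup G} (hH : IsVerballyClosed H) (n : ℕ)
    (x : Abelianization G) (hx : x ^ n ∈ H.map (Abelianization.of : G →* Abelianization G)) :
    ∃ y ∈ H.map (Abelianization.of : G →* Abelianization G), y ^ n = x ^ n := by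
  obtain ⟨g, rfl⟩ : ∃ g, Abelianization.of g = x :=
    QuotientGroup.induction_on x fun g => ⟨g, rfl⟩
  obtain ⟨h, hhH, hh⟩ := hx
  have hc : (g ^ n)⁻¹ * h ∈ commutator G := by
    rw [← QuotientGroup.eq_one_iff ((g ^ n)⁻¹ * h) (N := commutator G)]
    show Abelianization.of ((g ^ n)⁻¹ * h) = 1
    rw [map_mul, map_inv, map_pow, hh]
    group
  obtain ⟨L, hL⟩ := exists_commList hc
  have hgc : g ^ n * ((g ^ n)⁻¹ * h) = h := by group
  -- variables
  let N := 2 * L.length + 1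
  let v0 : Fin N := ⟨0, by omega⟩
  let v1 : Fin L.length → Fin N := fun i => ⟨2 * i + 1, by omega⟩
  let v2 : Fin L.length → Fin N := fun i => ⟨2 * i + 2, by omega⟩
  let w : FreeGroup (Fin N) :=
    (FreeGroup.of v0) ^ n *
      ((List.finRange L.length).map
        (fun i => ⁅FreeGroup.of (v1 i), FreeGroup.of (v2 i)⁆)).prod
  have lift_eval : ∀ f : Fin N → G,
      FreeGroup.lift f w = (f v0) ^ n *
        ((List.finRange L.length).map (fun i => ⁅f (v1 i), f (v2 i)⁆)).prod := by
    intro f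
    simp only [w, map_mul, map_pow, map_list_prod, List.map_map, FreeGroup.lift_apply_of]
    congr 1
    apply congrArg
    apply List.map_congr_left
    intro i _
    simp [Function.comp, map_commutatorElement, FreeGroup.lift_apply_of]
  let gf : Fin N → G := fun j =>
    if j.val = 0 then g
    else if j.val % 2 = 1 then (L.getD ((j.val - 1) / 2) (1, 1)).1
    else (L.getD ((j.val - 2) / 2) (1, 1)).2
  have hgf0 : gf v0 = g := by simp [gf, v0]
  have hgf1 : ∀ i : Fin L.length, gf (v1 i) = (L.getD i (1, 1)).1 := by
    intro i
    show (if 2 * (i : ℕ) + 1 = 0 then g else if (2 * (i : ℕ) + 1) % 2 = 1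
      then (L.getD ((2 * (i : ℕ) + 1 - 1) / 2) (1, 1)).1
      else (L.getD ((2 * (i : ℕ) + 1 - 2) / 2) (1, 1)).2) = (L.getD i (1, 1)).1
    rw [if_neg (by omega), if_pos (by omega)]
    have : (2 * (i : ℕ) + 1 - 1) / 2 = (i : ℕ) := by omega
    rw [this]
  have hgf2 : ∀ i : Fin L.length, gf (v2 i) = (L.getD i (1, 1)).2 := by
    intro i
    show (if 2 * (i : ℕ) + 2 = 0 then g else if (2 * (i : ℕ) + 2) % 2 = 1
      then (L.getD ((2 * (i : ℕ) + 2 - 1) / 2) (1, 1)).1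
      else (L.getD ((2 * (i : ℕ) + 2 - 2) / 2) (1, 1)).2) = (L.getD i (1, 1)).2
    rw [if_neg (by omega), if_neg (by omega)]
    have : (2 * (i : ℕ) + 2 - 2) / 2 = (i : ℕ) := by omega
    rw [this]
  have hprod : ∀ f : Fin N → G, (∀ i, f (v1 i) = (L.getD i (1, 1)).1) →
      (∀ i, f (v2 i) = (L.getD i (1, 1)).2) →
      ((List.finRange L.length).map (fun i => ⁅f (v1 i), f (v2 i)⁆)).prod
        = (L.map fun p => ⁅p.1, p.2⁆).prod := by
    intro f h1 h2
    congr 1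
    have heq : (fun i : Fin L.length => ⁅f (v1 i), f (v2 i)⁆)
        = (fun p : G × G => ⁅p.1, p.2⁆) ∘ L.get := by
      funext i
      rw [h1 i, h2 i, List.getD_eq_getElem _ _ i.isLt]
      rfl
    rw [heq, ← List.map_map, List.map_get_finRange]
  have hsolG : FreeGroup.lift gf w = h := by
    rw [lift_eval, hgf0, hprod gf hgf1 hgf2, hL, hgc]
  obtain ⟨f', hf'H, hf'⟩ := hH N w h hhH ⟨gf, hsolG⟩
  refine ⟨Abelianization.of (f' v0), ⟨f' v0, hf'H v0, rfl⟩, ?_⟩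
  rw [lift_eval] at hf'
  have hofh : Abelianization.of h = Abelianization.of (f' v0) ^ n := by
    rw [← hf', map_mul, map_pow, map_list_prod, List.map_map]
    have hone : ((List.finRange L.length).map
        ((Abelianization.of : G →* Abelianization G) ∘
          fun i => ⁅f' (v1 i), f' (v2 i)⁆)).prod = 1 := by
      apply List.prod_eq_one
      intro a ha
      obtain ⟨i, _, rfl⟩ := List.mem_map.mp ha
      show Abelianization.of ⁅f' (v1 i), f' (v2 i)⁆ = 1
      rw [map_commutatorElement]
      exact commutatorElement_eq_one_iff_commute.mpr (mul_comm _ _)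
    rw [hone, mul_one]
  rw [← hh, hofh]





lemma module_part {r : ℕ} (S : Submodule ℤ (Fin r → ℤ))
    (hsat : ∀ (m : Fin r → ℤ) (z : ℤ), z ≠ 0 → z • m ∈ S → m ∈ S) :
    ∃ C : Submodule ℤ (Fin r → ℤ), S ⊓ C = ⊥ ∧ S ⊔ C = ⊤ := by
  haveI : NoZeroSMulDivisors ℤ ((Fin r → ℤ) ⧸ S) := by
    refine ⟨fun {z x} h => ?_⟩
    by_cases hz : z = 0
    · exact Or.inl hz
    · right
      obtain ⟨m, rfl⟩ := Submodule.Quotient.mk_surjective S x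
      rw [← Submodule.Quotient.mk_smul, Submodule.Quotient.mk_eq_zero] at h
      rw [Submodule.Quotient.mk_eq_zero]
      exact hsat m z hz h
  obtain ⟨s, hs⟩ := Module.projective_lifting_property S.mkQ LinearMap.id S.mkQ_surjective
  refine ⟨LinearMap.range s, ?_, ?_⟩
  · rw [eq_bot_iff]
    rintro x ⟨hxS, q, rfl⟩
    have h1 : S.mkQ (s q) = q := LinearMap.congr_fun hs q
    have h2 : S.mkQ (s q) = 0 := (Submodule.Quotient.mk_eq_zero _).2 hxS
    have : q = 0 := by rw [← h1, h2]
    simp [this]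
  · rw [eq_top_iff]
    intro x _
    have hx1 : x - s (S.mkQ x) ∈ S := by
      rw [← Submodule.Quotient.mk_eq_zero]
      have : S.mkQ (x - s (S.mkQ x)) = 0 := by
        have h1 : S.mkQ (s (S.mkQ x)) = S.mkQ x := LinearMap.congr_fun hs (S.mkQ x)
        rw [map_sub, h1, sub_self]
      simpa using this
    have hd : x = (x - s (S.mkQ x)) + s (S.mkQ x) := by abel
    exact hd ▸ Submodule.add_mem_sup hx1 ⟨_, rfl⟩


end AuxVC

/-- If `G/G'` is free abelian of finite rank and `H` is verbally closed in `G`, then the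
image of `H` in `G/G'` is a direct factor. -/
theorem verballyClosed_image_directFactor {G : Type*} [Group G] (r : ℕ)
    (hfree : Nonempty (Abelianization G ≃* Multiplicative (Fin r → ℤ)))
    (H : Subgroup G) (hH : IsVerballyClosed H) :
    ∃ C : Subgroup (Abelianization G),
      (H.map (Abelianization.of : G →* Abelianization G)) ⊓ C = ⊥ ∧
      (H.map (Abelianization.of : G →* Abelianization G)) ⊔ C = ⊤ := by
  obtain ⟨e⟩ := hfree
  set B := H.map (Abelianization.of : G →* Abelianization G) with hB
  let Φ : Subgroup (Abelianization G) ≃o Submodule ℤ (Fin r → ℤ) :=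
    (MulEquiv.mapSubgroup e).trans (Subgroup.toAddSubgroup'.trans AddSubgroup.toIntSubmodule)
  have hmem : ∀ (m : Fin r → ℤ) (K : Subgroup (Abelianization G)),
      m ∈ Φ K ↔ e.symm (Multiplicative.ofAdd m) ∈ K := by
    intro m K
    show Multiplicative.ofAdd m ∈ Subgroup.map (e : Abelianization G →* Multiplicative (Fin r → ℤ)) K ↔ _
    exact Subgroup.mem_map_equiv
  have hsatN : ∀ (m : Fin r → ℤ) (n : ℕ), n ≠ 0 → (n : ℤ) • m ∈ Φ B → m ∈ Φ B := by
    intro m n hn hnm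
    have hx : (e.symm (Multiplicative.ofAdd m)) ^ n ∈ B := by
      have h1 : e.symm (Multiplicative.ofAdd m) ^ n
          = e.symm (Multiplicative.ofAdd ((n : ℤ) • m)) := by
        rw [← map_pow, natCast_zsmul, ofAdd_nsmul]
      rw [h1]
      exact (hmem _ _).mp hnm
    obtain ⟨y, hyB, hyn⟩ := key_pow hH n _ hx
    set m' := Multiplicative.toAdd (e y) with hm'
    have hy : e.symm (Multiplicative.ofAdd m') = y := by simp [hm']
    have hsm : (n : ℤ) • m' = (n : ℤ) • m := by
      have h2 := congrArg (fun z => Multiplicative.toAdd (e z)) hyn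
      simp only [map_pow, toAdd_pow] at h2
      simp only [MulEquiv.apply_symm_apply] at h2
      rw [natCast_zsmul, natCast_zsmul]
      simpa using h2
    have hmm : m' = m :=
      smul_right_injective (Fin r → ℤ) (by exact_mod_cast hn) hsm
    rw [← hmm]
    exact (hmem m' B).mpr (hy ▸ hyB)
  have hsat : ∀ (m : Fin r → ℤ) (z : ℤ), z ≠ 0 → z • m ∈ Φ B → m ∈ Φ B := by
    intro m z hz hzm
    rcases Int.natAbs_eq z with hz' | hz'
    · exact hsatN m z.natAbs (Int.natAbs_ne_zero.mpr hz) (hz' ▸ hzm)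
    · refine hsatN m z.natAbs (Int.natAbs_ne_zero.mpr hz) ?_
      have : (z.natAbs : ℤ) • m = -(z • m) := by
        rw [← neg_smul]; congr 1; omega
      rw [this]
      exact (Φ B).neg_mem hzm
  obtain ⟨C2, hinf, hsup⟩ := module_part (Φ B) hsat
  refine ⟨Φ.symm C2, ?_, ?_⟩
  · have : Φ.symm (Φ B ⊓ C2) = Φ.symm ⊥ := congrArg _ hinf
    rwa [Φ.symm.map_inf, Φ.symm_apply_apply, Φ.symm.map_bot] at this
  · have : Φ.symm (Φ B ⊔ C2) = Φ.symm ⊤ := congrArg _ hsup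
    rwa [Φ.symm.map_sup, Φ.symm_apply_apply, Φ.symm.map_top] at this
end

section
/- Let G be the free solvable group S_{r,d} of finite rank r and solvability class d, and let H = ⟨h⟩ be a nontrivial cyclic subgroup of G. Then the following are equivalent: (1) H is verbally closed in G; (2) H is a retract of G; (3) the image of h in the abelianization G/G' (a free abelian group of rank r) is a primitive element (part of a basis). -/
instance (r d : ℕ) : (derivedSeries (FreeGroup (Fin r)) d).Normal :=
  derivedSeries_normal _ _

/-- The free solvable group `S_{r,d}` of rank `r` and derived length `d`. -/
abbrev FreeSolvable (r d : ℕ) : Type :=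
  FreeGroup (Fin r) ⧸ derivedSeries (FreeGroup (Fin r)) d

/-- The canonical basis of the free solvable group. -/
def FreeSolvable.gen (r d : ℕ) (i : Fin r) : FreeSolvable r d :=
  QuotientGroup.mk (FreeGroup.of i)

/-- The minimal number of generators of the subgroup `B` equals `k`. -/
def SubgroupRank {A : Type*} [Group A] (B : Subgroup A) (k : ℕ) : Prop :=
  IsLeast {n : ℕ | ∃ f : Fin n → A, Subgroup.closure (Set.range f) = B} k


open Subgroup Multiplicative
open scoped commutatorElement

section MyAux

variable {G : Type*} [Group G]

lemma myCommutator_le_ker {A : Type*} [CommGroup A] (f : G →* A) :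
    commutator G ≤ f.ker := by
  rw [commutator_def, Subgroup.commutator_le]
  intro g1 _ g2 _
  rw [MonoidHom.mem_ker, map_commutatorElement]
  exact commutatorElement_eq_one_iff_commute.mpr (mul_comm _ _)

lemma myDerivedSeries_le_commutator (d : ℕ) : derivedSeries G (d + 1) ≤ commutator G := by
  induction d with
  | zero => rw [derivedSeries_one]
  | succ n ih =>
    refine le_trans ?_ ih
    rw [derivedSeries_succ, Subgroup.commutator_le]
    intro g1 h1 g2 h2
    rw [commutatorElement_def]
    exact mul_mem (mul_mem (mul_mem h1 h2) (inv_mem h1)) (inv_mem h2)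

lemma exists_commutator_list {c : G} (hc : c ∈ commutator G) :
    ∃ L : List (G × G), (L.map fun p : G × G => ⁅p.1, p.2⁆).prod = c := by
  rw [commutator_eq_closure] at hc
  induction hc using Subgroup.closure_induction with
  | mem x hx => obtain ⟨a, b, rfl⟩ := hx; exact ⟨[(a, b)], by simp⟩
  | one => exact ⟨[], rfl⟩
  | mul x y _ _ ihx ihy =>
    obtain ⟨L1, h1⟩ := ihx; obtain ⟨L2, h2⟩ := ihy
    exact ⟨L1 ++ L2, by simp [h1, h2]⟩
  | inv x _ ihx =>
    obtain ⟨L, hL⟩ := ihx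
    refine ⟨(L.map Prod.swap).reverse, ?_⟩
    subst hL
    rw [List.map_reverse, List.map_map]
    have h2 : ((fun p : G × G => ⁅p.1, p.2⁆) ∘ Prod.swap) =
        (fun x => x⁻¹) ∘ (fun p : G × G => ⁅p.1, p.2⁆) := by
      funext p
      exact (commutatorElement_inv p.1 p.2).symm
    rw [h2, ← List.map_map, ← List.prod_inv_reverse]

lemma myLift_map {α β : Type*} {H : Type*} [Group H] (f : α → β) (g : β → H)
    (w : FreeGroup α) :
    FreeGroup.lift g (FreeGroup.map f w) = FreeGroup.lift (g ∘ f) w := by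
  have h1 : (FreeGroup.lift g).comp (FreeGroup.map f) = FreeGroup.lift (g ∘ f) := by
    ext x
    simp
  exact DFunLike.congr_fun h1 w

end MyAux

/-- exponent-sum homomorphism on the free group -/
noncomputable def expSum {r : ℕ} (i : Fin r) : FreeGroup (Fin r) →* Multiplicative ℤ :=
  FreeGroup.lift (fun j => ofAdd (if j = i then (1 : ℤ) else 0))

noncomputable def fgAb (r : ℕ) : FreeGroup (Fin r) →* Multiplicative (Fin r →₀ ℤ) :=
  FreeGroup.lift (fun i => ofAdd (Finsupp.single i 1))

lemma mem_commutator_of_expSum_eq_one {r : ℕ} {x : FreeGroup (Fin r)}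
    (hx : ∀ i : Fin r, expSum i x = 1) :
    x ∈ commutator (FreeGroup (Fin r)) := by
  set θ : Abelianization (FreeGroup (Fin r)) →* Multiplicative (Fin r →₀ ℤ) :=
    Abelianization.lift (fgAb r) with hθ
  set back : Multiplicative (Fin r →₀ ℤ) →* Abelianization (FreeGroup (Fin r)) :=
    AddMonoidHom.toMultiplicativeLeft
      (Finsupp.liftAddHom fun i =>
        zmultiplesHom (Additive (Abelianization (FreeGroup (Fin r))))
          (Additive.ofMul (Abelianization.of (FreeGroup.of i)))) with hback
  have hba : back.comp θ = MonoidHom.id _ := by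
    apply Abelianization.hom_ext
    apply FreeGroup.ext_hom
    intro i
    simp [hθ, hback, fgAb, Finsupp.sum_single_index, zmultiplesHom_apply, one_zsmul]
  have hEx : fgAb r x = 1 := by
    have hcoord : ∀ i : Fin r, Multiplicative.toAdd (fgAb r x) i = 0 := by
      intro i
      have key : (AddMonoidHom.toMultiplicative (Finsupp.applyAddHom i)).comp (fgAb r)
          = expSum i := by
        apply FreeGroup.ext_hom
        intro j
        simp [fgAb, expSum, Finsupp.single_apply]
      have h2 := DFunLike.congr_fun key x
      simp only [MonoidHom.comp_apply] at h2
      have h1 : (AddMonoidHom.toMultiplicative (Finsupp.applyAddHom i)) (fgAb r x) = 1 := by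
        rw [h2, hx i]
      simpa using h1
    have h3 : Multiplicative.toAdd (fgAb r x) = 0 := Finsupp.ext hcoord
    simpa using h3
  have h1 : Abelianization.of x = 1 := by
    have h2 : θ (Abelianization.of x) = 1 := by
      simp [hθ, hEx]
    have h4 := DFunLike.congr_fun hba (Abelianization.of x)
    simp only [MonoidHom.comp_apply, MonoidHom.id_apply] at h4
    rw [← h4, h2, map_one]
  exact (QuotientGroup.eq_one_iff x).mp h1

lemma expSum_of_zpow {r : ℕ} (i j : Fin r) (m : ℤ) :
    expSum i ((FreeGroup.of j) ^ m) = ofAdd (m * (if j = i then 1 else 0)) := by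
  rw [map_zpow]
  simp only [expSum, FreeGroup.lift_apply_of]
  rw [← ofAdd_zsmul]
  simp [zsmul_eq_mul]

lemma IsRetract.isVerballyClosed {G : Type*} [Group G] {H : Subgroup G}
    (hr : IsRetract H) : IsVerballyClosed H := by
  obtain ⟨ρ, hmem, hfix⟩ := hr
  rintro n w h hh ⟨g, hg⟩
  refine ⟨ρ ∘ g, fun j => hmem _, ?_⟩
  have h1 : FreeGroup.lift (ρ ∘ g) = ρ.comp (FreeGroup.lift g) := by
    apply FreeGroup.ext_hom; intro i; simp
  rw [h1, MonoidHom.comp_apply, hg, hfix h hh]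

lemma retract_of_hom {G : Type*} [Group G] (h : G) (ψ : G →* Multiplicative ℤ)
    (hψ : ψ h = ofAdd 1) : IsRetract (Subgroup.zpowers h) := by
  refine ⟨(zpowersHom G h).comp ψ, fun g => ?_, fun g hg => ?_⟩
  · exact Subgroup.mem_zpowers_iff.mpr ⟨_, rfl⟩
  · obtain ⟨m, rfl⟩ := Subgroup.mem_zpowers_iff.mp hg
    rw [MonoidHom.comp_apply, map_zpow, hψ, map_zpow, zpowersHom_apply]
    simp

lemma vc_to_prim (r d' : ℕ) (h : FreeSolvable r (d' + 1)) (hne : h ≠ 1)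
    (hvc : IsVerballyClosed (Subgroup.zpowers h)) :
    ∃ φ : Abelianization (FreeSolvable r (d' + 1)) →* Multiplicative ℤ,
      φ (Abelianization.of h) = ofAdd 1 := by
  set N := derivedSeries (FreeGroup (Fin r)) (d' + 1) with hN
  set π : FreeGroup (Fin r) →* FreeSolvable r (d' + 1) := QuotientGroup.mk' N with hπ
  obtain ⟨x, hx⟩ := QuotientGroup.mk'_surjective N h
  set a : Fin r → ℤ := fun i => toAdd (expSum i x) with ha
  have hExX : ∀ i, expSum i x = ofAdd (a i) := fun i => rfl
  set y : FreeGroup (Fin r) := (List.ofFn fun i : Fin r => (FreeGroup.of i) ^ (a i)).prod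
    with hy
  have hEy : ∀ i, expSum i y = ofAdd (a i) := by
    intro i
    rw [hy, map_list_prod, List.map_ofFn]
    have e1 : (⇑(expSum i)) ∘ (fun j : Fin r => (FreeGroup.of j) ^ (a j))
        = fun j : Fin r => ofAdd ((a j) * (if j = i then 1 else 0)) := by
      funext j; exact expSum_of_zpow i j (a j)
    rw [e1, List.prod_ofFn, ← ofAdd_sum]
    congr 1
    simp [mul_ite, Finset.sum_ite_eq']
  set x' : FreeGroup (Fin r) := y⁻¹ * x with hx'
  have hx'mem : x' ∈ commutator (FreeGroup (Fin r)) := by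
    apply mem_commutator_of_expSum_eq_one
    intro i
    rw [hx', map_mul, map_inv, hEy i, hExX i, inv_mul_cancel]
  obtain ⟨L, hL⟩ := exists_commutator_list hx'mem
  set e : (Fin r ⊕ (Fin L.length ⊕ Fin L.length)) ≃ Fin (r + (L.length + L.length)) :=
    (Equiv.sumCongr (Equiv.refl (Fin r)) finSumFinEquiv).trans finSumFinEquiv with he
  set w0 : FreeGroup (Fin r ⊕ (Fin L.length ⊕ Fin L.length)) :=
    (List.ofFn fun i : Fin r =>
      (FreeGroup.of (Sum.inl i : Fin r ⊕ (Fin L.length ⊕ Fin L.length))) ^ (a i)).prod *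
    (List.ofFn fun j : Fin L.length =>
      ⁅FreeGroup.of (Sum.inr (Sum.inl j) : Fin r ⊕ (Fin L.length ⊕ Fin L.length)),
       FreeGroup.of (Sum.inr (Sum.inr j) : Fin r ⊕ (Fin L.length ⊕ Fin L.length))⁆).prod with hw0
  set w : FreeGroup (Fin (r + (L.length + L.length))) := FreeGroup.map e w0 with hw
  have heval : ∀ {T : Type} [Group T] (g : (Fin r ⊕ (Fin L.length ⊕ Fin L.length)) → T),
      FreeGroup.lift g w0 =
        (List.ofFn fun i : Fin r => (g (Sum.inl i)) ^ (a i)).prod *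
        (List.ofFn fun j : Fin L.length =>
          ⁅g (Sum.inr (Sum.inl j)), g (Sum.inr (Sum.inr j))⁆).prod := by
    intro T _ g
    rw [hw0, map_mul, map_list_prod, map_list_prod, List.map_ofFn, List.map_ofFn]
    have c1 : (⇑(FreeGroup.lift g)) ∘
        (fun i : Fin r => (FreeGroup.of (Sum.inl i : Fin r ⊕ (Fin L.length ⊕ Fin L.length))) ^ (a i))
        = fun i : Fin r => (g (Sum.inl i)) ^ (a i) := by
      funext i; simp [map_zpow]
    have c2 : (⇑(FreeGroup.lift g)) ∘
        (fun j : Fin L.length =>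
          ⁅FreeGroup.of (Sum.inr (Sum.inl j) : Fin r ⊕ (Fin L.length ⊕ Fin L.length)),
           FreeGroup.of (Sum.inr (Sum.inr j) : Fin r ⊕ (Fin L.length ⊕ Fin L.length))⁆)
        = fun j : Fin L.length => ⁅g (Sum.inr (Sum.inl j)), g (Sum.inr (Sum.inr j))⁆ := by
      funext j; simp [map_commutatorElement]
    rw [c1, c2]
  have hfac1 : π y = (List.ofFn fun i : Fin r => (π (FreeGroup.of i)) ^ (a i)).prod := by
    rw [hy, map_list_prod, List.map_ofFn]
    have c : (⇑π) ∘ (fun i : Fin r => (FreeGroup.of i) ^ (a i))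
        = fun i : Fin r => (π (FreeGroup.of i)) ^ (a i) := by
      funext i; simp [map_zpow]
    rw [c]
  have hfac2 : π x' =
      (List.ofFn fun j : Fin L.length => ⁅π ((L.get j).1), π ((L.get j).2)⁆).prod := by
    conv_lhs => rw [← hL]
    rw [map_list_prod, List.map_map]
    have c : ((⇑π) ∘ fun p : FreeGroup (Fin r) × FreeGroup (Fin r) => ⁅p.1, p.2⁆)
        = fun p : FreeGroup (Fin r) × FreeGroup (Fin r) => ⁅π p.1, π p.2⁆ := by
      funext p; exact map_commutatorElement π p.1 p.2
    rw [c]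
    conv_lhs => rw [← List.ofFn_get L, List.map_ofFn]
    rfl
  have hsolG : ∃ g : Fin (r + (L.length + L.length)) → FreeSolvable r (d' + 1),
      FreeGroup.lift g w = h := by
    refine ⟨(Sum.elim (fun i => π (FreeGroup.of i))
      (Sum.elim (fun j : Fin L.length => π ((L.get j).1))
        (fun j : Fin L.length => π ((L.get j).2)))) ∘ e.symm, ?_⟩
    rw [hw, myLift_map]
    have hcomp : ((Sum.elim (fun i => π (FreeGroup.of i))
        (Sum.elim (fun j : Fin L.length => π ((L.get j).1))
          (fun j : Fin L.length => π ((L.get j).2)))) ∘ ⇑e.symm) ∘ ⇑e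
        = Sum.elim (fun i => π (FreeGroup.of i))
          (Sum.elim (fun j : Fin L.length => π ((L.get j).1))
            (fun j : Fin L.length => π ((L.get j).2))) := by
      funext u
      simp [Function.comp_apply, Equiv.symm_apply_apply]
    rw [hcomp, heval]
    simp only [Sum.elim_inl, Sum.elim_inr]
    rw [← hfac1, ← hfac2, ← map_mul, hx']
    rw [mul_inv_cancel_left]
    exact hx
  obtain ⟨g, hgH, hgw⟩ := hvc _ w h (Subgroup.mem_zpowers h) hsolG
  choose k hk using fun j => Subgroup.mem_zpowers_iff.mp (hgH j)
  set t : ℤ := ∑ i : Fin r, k (e (Sum.inl i)) * a i with htdef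
  have heq : h = h ^ t := by
    have h1 := hgw
    rw [hw, myLift_map, heval] at h1
    have hB : (List.ofFn fun j : Fin L.length =>
        ⁅(g ∘ ⇑e) (Sum.inr (Sum.inl j)), (g ∘ ⇑e) (Sum.inr (Sum.inr j))⁆).prod = 1 := by
      have c : (fun j : Fin L.length =>
          ⁅(g ∘ ⇑e) (Sum.inr (Sum.inl j)), (g ∘ ⇑e) (Sum.inr (Sum.inr j))⁆)
          = fun _ => (1 : FreeSolvable r (d' + 1)) := by
        funext j
        rw [Function.comp_apply, Function.comp_apply,
          ← hk (e (Sum.inr (Sum.inl j))), ← hk (e (Sum.inr (Sum.inr j)))]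
        exact commutatorElement_eq_one_iff_commute.mpr (Commute.zpow_zpow_self h _ _)
      rw [c]
      simp
    have hA : (List.ofFn fun i : Fin r => ((g ∘ ⇑e) (Sum.inl i)) ^ a i).prod = h ^ t := by
      have c : (fun i : Fin r => ((g ∘ ⇑e) (Sum.inl i)) ^ a i)
          = fun i : Fin r =>
            (zpowersHom _ h) (ofAdd (k (e (Sum.inl i)) * a i)) := by
        funext i
        rw [Function.comp_apply, ← hk (e (Sum.inl i)), ← zpow_mul]
        rfl
      rw [c]
      have c2 : (List.ofFn fun i : Fin r =>
          (zpowersHom _ h) (ofAdd (k (e (Sum.inl i)) * a i))).prod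
          = (zpowersHom _ h) ((List.ofFn fun i : Fin r =>
              ofAdd (k (e (Sum.inl i)) * a i)).prod) := by
        rw [map_list_prod, List.map_ofFn]
        rfl
      rw [c2, List.prod_ofFn, ← ofAdd_sum]
      rfl
    rw [hA, hB, mul_one] at h1
    exact h1.symm
  have hxp : x ^ (1 - t) ∈ N := by
    have h2 : π (x ^ (1 - t)) = 1 := by
      rw [map_zpow, hx, zpow_sub, zpow_one, ← heq, mul_inv_cancel]
    exact (QuotientGroup.eq_one_iff _).mp h2
  have hzero : ∀ i, (1 - t) * a i = 0 := by
    intro i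
    have h2 : expSum i (x ^ (1 - t)) = 1 :=
      myCommutator_le_ker (expSum i) (myDerivedSeries_le_commutator d' hxp)
    rw [map_zpow, hExX i, ← ofAdd_zsmul] at h2
    have h3 := congrArg toAdd h2
    simpa only [toAdd_ofAdd, toAdd_one, zsmul_eq_mul, Int.cast_id] using h3
  have ht1 : t = 1 := by
    by_cases hall : ∀ i, a i = 0
    · exfalso
      apply hne
      have h0 : t = 0 := by
        rw [htdef]
        simp [hall]
      rw [heq, h0, zpow_zero]
    · push_neg at hall
      obtain ⟨i, hi⟩ := hall
      rcases mul_eq_zero.mp (hzero i) with h0 | h0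
      · omega
      · exact absurd h0 hi
  set Ψ : FreeGroup (Fin r) →* Multiplicative ℤ :=
    FreeGroup.lift (fun i => ofAdd (k (e (Sum.inl i)))) with hΨ
  have hkill : N ≤ Ψ.ker :=
    le_trans (myDerivedSeries_le_commutator d') (myCommutator_le_ker Ψ)
  refine ⟨Abelianization.lift (QuotientGroup.lift N Ψ hkill), ?_⟩
  rw [Abelianization.lift_apply_of]
  have hψh : QuotientGroup.lift N Ψ hkill h = ofAdd t := by
    rw [← hx]
    have hmk : QuotientGroup.lift N Ψ hkill (QuotientGroup.mk' N x) = Ψ x :=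
      QuotientGroup.lift_mk' N hkill x
    rw [hmk]
    have hxdecomp : x = y * x' := by rw [hx', mul_inv_cancel_left]
    rw [hxdecomp, map_mul]
    have hΨx' : Ψ x' = 1 := myCommutator_le_ker Ψ hx'mem
    have hΨy : Ψ y = ofAdd t := by
      rw [hy, map_list_prod, List.map_ofFn]
      have c : (⇑Ψ) ∘ (fun i : Fin r => (FreeGroup.of i) ^ (a i))
          = fun i : Fin r => ofAdd (k (e (Sum.inl i)) * a i) := by
        funext i
        simp only [Function.comp_apply, map_zpow, hΨ, FreeGroup.lift_apply_of]
        rw [← ofAdd_zsmul]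
        congr 1
        rw [zsmul_eq_mul]
        push_cast
        ring
      rw [c, List.prod_ofFn, ← ofAdd_sum]
    rw [hΨy, hΨx', mul_one]
  rw [hψh, ht1]

/-- For a nontrivial cyclic subgroup `⟨h⟩` of the free solvable group `S_{r,d}`, being
verbally closed, being a retract, and primitivity of the image of `h` in the
abelianization are all equivalent. -/
theorem cyclic_verballyClosed_iff (r d : ℕ) (h : FreeSolvable r d) (hne : h ≠ 1) :
    (IsVerballyClosed (Subgroup.zpowers h) ↔ IsRetract (Subgroup.zpowers h)) ∧
    (IsRetract (Subgroup.zpowers h) ↔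
      ∃ φ : Abelianization (FreeSolvable r d) →* Multiplicative ℤ,
        φ (Abelianization.of h) = Multiplicative.ofAdd 1) := by
  cases d with
  | zero =>
    exfalso
    obtain ⟨x, rfl⟩ := QuotientGroup.mk'_surjective (derivedSeries (FreeGroup (Fin r)) 0) h
    exact hne ((QuotientGroup.eq_one_iff x).mpr (by rw [derivedSeries_zero]; exact Subgroup.mem_top x))
  | succ d' =>
    have hRV : IsRetract (Subgroup.zpowers h) → IsVerballyClosed (Subgroup.zpowers h) :=
      IsRetract.isVerballyClosed
    have hPR : (∃ φ : Abelianization (FreeSolvable r (d' + 1)) →* Multiplicative ℤ,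
        φ (Abelianization.of h) = ofAdd 1) → IsRetract (Subgroup.zpowers h) := by
      rintro ⟨φ, hφ⟩
      exact retract_of_hom h (φ.comp Abelianization.of) hφ
    have hVP := vc_to_prim r d' h hne
    exact ⟨⟨fun hv => hPR (hVP hv), hRV⟩, ⟨fun hr => hVP (hRV hr), hPR⟩⟩
end

section
/- Let M_2 be the free metabelian group of rank 2 with basis {z_1, z_2}. If g_1, g_2 ∈ M_2 satisfy [[g_1, g_2], g_2], g_1] = [[[z_1, z_2], z_2], z_1], then g_i ≡ z_i^{ε_i} (mod M_2') with ε_i ∈ {±1} for i = 1, 2. -/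
open scoped commutatorElement
/-! ### Auxiliary machinery

We realise the relevant information about the free metabelian group of rank 2 via
homomorphisms to affine groups over the truncated polynomial ring `ℤ[T]/(T⁴)`. -/

noncomputable section MetabAux

namespace MetabAux

/-- The truncated polynomial ring `ℤ[T]/(T⁴)`. -/
abbrev R : Type := Polynomial ℤ ⧸ Ideal.span {(Polynomial.X : Polynomial ℤ) ^ 4}

def t : R := Ideal.Quotient.mk _ Polynomial.X

lemma t4 : t ^ 4 = 0 := by
  rw [t, ← map_pow, Ideal.Quotient.eq_zero_iff_mem]
  exact Ideal.subset_span rfl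

/-- Evaluation at `0` (the augmentation). -/
def eps : R →+* ℤ :=
  Ideal.Quotient.lift _ (Polynomial.evalRingHom 0) (by
    intro p hp
    rw [Ideal.mem_span_singleton] at hp
    obtain ⟨q, rfl⟩ := hp
    simp)

@[simp] lemma eps_t : eps t = 0 := by
  simp [eps, t]

lemma decompose (m : R) : ∃ m' : R, m = ((eps m : ℤ) : R) + t * m' := by
  obtain ⟨p, rfl⟩ := Ideal.Quotient.mk_surjective m
  obtain ⟨q, hq⟩ : (Polynomial.X : Polynomial ℤ) ∣ (p - Polynomial.C (p.coeff 0)) := by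
    rw [Polynomial.X_dvd_iff]; simp
  refine ⟨Ideal.Quotient.mk _ q, ?_⟩
  have h1 : eps (Ideal.Quotient.mk _ p) = p.coeff 0 := by
    simp [eps, Polynomial.coeff_zero_eq_eval_zero]
  have h2 : p = Polynomial.C (p.coeff 0) + Polynomial.X * q := by
    rw [← hq]; ring
  rw [h1]
  conv_lhs => rw [h2]
  rw [map_add, map_mul]
  simp [t, Polynomial.C_eq_intCast]

lemma cast_t3_inj {x y : ℤ} (h : (x : R) * t ^ 3 = (y : R) * t ^ 3) : x = y := by
  have h0 : ((x - y : ℤ) : R) * t ^ 3 = 0 := by push_cast; linear_combination h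
  have h1 : (Ideal.Quotient.mk (Ideal.span {(Polynomial.X : Polynomial ℤ) ^ 4})
      (Polynomial.C (x - y) * Polynomial.X ^ 3)) = 0 := by
    rw [map_mul, map_pow]
    rw [show Polynomial.C (x - y) = ((x - y : ℤ) : Polynomial ℤ) by simp, map_intCast]
    exact h0
  rw [Ideal.Quotient.eq_zero_iff_mem, Ideal.mem_span_singleton] at h1
  obtain ⟨q, hq⟩ := h1
  have := congrArg (fun p => Polynomial.coeff p 3) hq
  simp only [Polynomial.coeff_C_mul, Polynomial.coeff_X_pow] at this
  have h2 : (Polynomial.X ^ 4 * q).coeff 3 = 0 := by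
    rw [mul_comm, Polynomial.coeff_mul_X_pow']
    simp
  rw [h2] at this
  simp at this
  omega

/-- The unit `1 + t` of `R`. -/
def w : Rˣ where
  val := 1 + t
  inv := 1 - t + t ^ 2 - t ^ 3
  val_inv := by linear_combination -t4
  inv_val := by linear_combination -t4

@[simp] lemma w_val : (w : R) = 1 + t := rfl

lemma w_zpow (k : ℤ) : ∃ r : R, ((w ^ k : Rˣ) : R) = 1 + (k : R) * t + t ^ 2 * r := by
  induction k using Int.induction_on with
  | zero => exact ⟨0, by simp⟩
  | succ n ih =>
    obtain ⟨r, hr⟩ := ih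
    refine ⟨r + (n : R) + r * t, ?_⟩
    have h : (w ^ ((n : ℤ) + 1) : Rˣ) = w ^ (n : ℤ) * w := by
      rw [zpow_add_one]
    rw [h, Units.val_mul, hr, w_val]
    push_cast
    ring
  | pred n ih =>
    obtain ⟨r, hr⟩ := ih
    refine ⟨(1 + (n : R) + r) - t * (1 + (n : R) + r), ?_⟩
    have h : (w ^ (-(n : ℤ) - 1) : Rˣ) = w ^ (-(n : ℤ)) * w⁻¹ := by
      rw [zpow_sub_one]
    rw [h, Units.val_mul, hr]
    have hwi : ((w⁻¹ : Rˣ) : R) = 1 - t + t ^ 2 - t ^ 3 := rfl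
    rw [hwi]
    push_cast
    linear_combination ((n : R) + r - r * t) * t4

/-- The key computation in `R`. -/
lemma key (k j m0 n0 : ℤ) (m n m' n' : R)
    (hm : m = (m0 : R) + t * m') (hn : n = (n0 : R) + t * n') :
    ((1 - ((w ^ j : Rˣ) : R)) * m + (((w ^ k : Rˣ) : R) - 1) * n) *
        (1 - ((w ^ j : Rˣ) : R)) * (1 - ((w ^ k : Rˣ) : R)) =
      ((k * j * (k * n0 - j * m0) : ℤ) : R) * t ^ 3 := by
  obtain ⟨rk, hrk⟩ := w_zpow k
  obtain ⟨rj, hrj⟩ := w_zpow j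
  set G : R := ((-((j : R) + t * rj)) * m + ((k : R) + t * rk) * n) *
      ((j : R) + t * rj) * ((k : R) + t * rk) with hG
  have hfac : ((1 - ((w ^ j : Rˣ) : R)) * m + (((w ^ k : Rˣ) : R) - 1) * n) *
      (1 - ((w ^ j : Rˣ) : R)) * (1 - ((w ^ k : Rˣ) : R)) = G * t ^ 3 := by
    rw [hrk, hrj, hG]; ring
  obtain ⟨x, hx⟩ := decompose G
  have heps : eps G = k * j * (k * n0 - j * m0) := by
    rw [hG, hm, hn]
    simp only [map_mul, map_add, map_neg, map_sub, eps_t, map_intCast, zero_mul, mul_zero,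
      add_zero, map_one]
    push_cast
    ring
  rw [hfac, hx, heps]
  have hexp : (((k * j * (k * n0 - j * m0) : ℤ) : R) + t * x) * t ^ 3 =
      ((k * j * (k * n0 - j * m0) : ℤ) : R) * t ^ 3 + t ^ 4 * x := by ring
  rw [hexp, t4]
  ring

/-- The affine group `S ⋊ Sˣ` of a commutative ring. -/
@[ext]
structure Aff (S : Type*) [CommRing S] where
  u : Sˣ
  m : S

namespace Aff

variable {S : Type*} [CommRing S] {S' : Type*} [CommRing S']

instance : Mul (Aff S) := ⟨fun A B => ⟨A.u * B.u, A.m + (A.u : S) * B.m⟩⟩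
instance : One (Aff S) := ⟨⟨1, 0⟩⟩
instance : Inv (Aff S) := ⟨fun A => ⟨A.u⁻¹, -(((A.u⁻¹ : Sˣ) : S) * A.m)⟩⟩

@[simp] lemma mul_u (A B : Aff S) : (A * B).u = A.u * B.u := rfl
@[simp] lemma mul_m (A B : Aff S) : (A * B).m = A.m + (A.u : S) * B.m := rfl
@[simp] lemma one_u : (1 : Aff S).u = 1 := rfl
@[simp] lemma one_m : (1 : Aff S).m = 0 := rfl
@[simp] lemma inv_u (A : Aff S) : (A⁻¹).u = A.u⁻¹ := rfl
@[simp] lemma inv_m (A : Aff S) : (A⁻¹).m = -(((A.u⁻¹ : Sˣ) : S) * A.m) := rfl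

instance : Group (Aff S) where
  mul_assoc A B C := by
    ext
    · simp [mul_assoc]
    · simp; ring
  one_mul A := by ext <;> simp
  mul_one A := by ext <;> simp
  inv_mul_cancel A := by
    ext
    · simp
    · simp

/-- Projection to the unit part. -/
def uHom : Aff S →* Sˣ where
  toFun := Aff.u
  map_one' := rfl
  map_mul' _ _ := rfl

@[simp] lemma uHom_apply (A : Aff S) : uHom A = A.u := rfl

/-- Functoriality of `Aff` in the ring. -/
def mapHom (f : S →+* S') : Aff S →* Aff S' where
  toFun A := ⟨Units.map (f : S →* S') A.u, f A.m⟩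
  map_one' := by ext <;> simp
  map_mul' A B := by
    ext
    · simp
    · simp

@[simp] lemma mapHom_u (f : S →+* S') (A : Aff S) :
    (mapHom f A).u = Units.map (f : S →* S') A.u := rfl
@[simp] lemma mapHom_m (f : S →+* S') (A : Aff S) : (mapHom f A).m = f A.m := rfl

/-- `Aff S` is metabelian: any hom from any group kills the second derived subgroup. -/
lemma map_derived_two {G : Type*} [Group G] (f : G →* Aff S) :
    derivedSeries G 2 ≤ f.ker := by
  intro x hx
  have h0 : (derivedSeries G 2).map f ≤ derivedSeries (Aff S) 2 :=
    map_derivedSeries_le_derivedSeries f 2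
  have h1 : derivedSeries (Aff S) 1 ≤ uHom.ker := by
    rw [derivedSeries_one, commutator_def, Subgroup.commutator_le]
    intro g _ h _
    rw [MonoidHom.mem_ker, map_commutatorElement]
    exact commutatorElement_eq_one_iff_mul_comm.mpr (mul_comm _ _)
  have h2 : derivedSeries (Aff S) 2 = ⊥ := by
    rw [derivedSeries_succ, ← le_bot_iff]
    refine le_trans (Subgroup.commutator_mono h1 h1) ?_
    rw [Subgroup.commutator_le]
    intro g hg h hh
    rw [MonoidHom.mem_ker] at hg hh
    have hgu : g.u = 1 := hg
    have hhu : h.u = 1 := hh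
    rw [Subgroup.mem_bot]
    apply commutatorElement_eq_one_iff_mul_comm.mpr
    ext
    · simp [hgu, hhu]
    · simp [hgu, hhu]; ring
  have hmem : f x ∈ (derivedSeries G 2).map f := Subgroup.mem_map_of_mem f hx
  rw [MonoidHom.mem_ker]
  have hmem2 := h0 hmem
  rw [h2] at hmem2
  simpa using hmem2

lemma comm_eq (A B C : Aff S) (h : C * (B * A) = A * B) : ⁅A, B⁆ = C := by
  have hC : C = A * B * (B * A)⁻¹ := by
    rw [← h]; group
  rw [commutatorElement_def, hC]
  group

lemma quad (A B : Aff S) :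
    ⁅⁅⁅A, B⁆, B⁆, A⁆ =
      ⟨1, ((1 - (B.u : S)) * A.m + ((A.u : S) - 1) * B.m) * (1 - (B.u : S)) * (1 - (A.u : S))⟩ := by
  have h1 : ⁅A, B⁆ = ⟨1, (1 - (B.u : S)) * A.m + ((A.u : S) - 1) * B.m⟩ := by
    apply comm_eq
    ext
    · simp [mul_comm]
    · simp; ring
  set q : S := (1 - (B.u : S)) * A.m + ((A.u : S) - 1) * B.m with hq
  have h2 : ⁅(⟨1, q⟩ : Aff S), B⁆ = ⟨1, q * (1 - (B.u : S))⟩ := by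
    apply comm_eq
    ext
    · simp [mul_comm]
    · simp; ring
  have h3 : ⁅(⟨1, q * (1 - (B.u : S))⟩ : Aff S), A⁆ =
      ⟨1, q * (1 - (B.u : S)) * (1 - (A.u : S))⟩ := by
    apply comm_eq
    ext
    · simp [mul_comm]
    · simp; ring
  rw [h1, h2, h3]

end Aff

/-! ### Homomorphisms out of the free metabelian group of rank 2 -/

abbrev M2 : Type := FreeSolvable 2 2

abbrev z (i : Fin 2) : M2 := FreeSolvable.gen 2 2 i

/-- Lift a pair of elements to a hom from `M2`, given that the target kills `derivedSeries 2`. -/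
def lift2 {G : Type*} [Group G] (A B : G)
    (h : ∀ f : FreeGroup (Fin 2) →* G, derivedSeries (FreeGroup (Fin 2)) 2 ≤ f.ker) :
    M2 →* G :=
  QuotientGroup.lift _ (FreeGroup.lift (fun i => if i = 0 then A else B))
    (fun _ hx => (h _) hx)

@[simp] lemma lift2_z0 {G : Type*} [Group G] (A B : G) (h) :
    lift2 A B h (z 0) = A := by
  show QuotientGroup.lift _ _ _ (QuotientGroup.mk (FreeGroup.of 0)) = A
  rw [QuotientGroup.lift_mk]
  simp

@[simp] lemma lift2_z1 {G : Type*} [Group G] (A B : G) (h) :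
    lift2 A B h (z 1) = B := by
  show QuotientGroup.lift _ _ _ (QuotientGroup.mk (FreeGroup.of 1)) = B
  rw [QuotientGroup.lift_mk]
  simp

lemma hom_ext {G : Type*} [Group G] {f g : M2 →* G}
    (h0 : f (z 0) = g (z 0)) (h1 : f (z 1) = g (z 1)) : f = g := by
  apply QuotientGroup.monoidHom_ext
  apply FreeGroup.ext_hom
  intro i
  fin_cases i
  · exact h0
  · exact h1

lemma comm_ker {G : Type*} [CommGroup G] (f : FreeGroup (Fin 2) →* G) :
    derivedSeries (FreeGroup (Fin 2)) 2 ≤ f.ker := by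
  intro x hx
  have h0 := map_derivedSeries_le_derivedSeries f 2 (Subgroup.mem_map_of_mem f hx)
  have h1 : derivedSeries G 1 = ⊥ := by
    rw [derivedSeries_one, ← le_bot_iff, commutator_def, Subgroup.commutator_le]
    intro g _ h _
    rw [Subgroup.mem_bot]
    exact commutatorElement_eq_one_iff_mul_comm.mpr (mul_comm _ _)
  have h2 : derivedSeries G 2 = ⊥ := by
    rw [derivedSeries_succ, h1, ← le_bot_iff, Subgroup.commutator_le]
    intro g hg h _
    rw [Subgroup.mem_bot] at hg ⊢
    rw [hg]
    group
  rw [MonoidHom.mem_ker]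
  rw [h2] at h0
  simpa using h0

/-- The abelianization data of an element of `M2`. -/
def abm : M2 →* Multiplicative (ℤ × ℤ) :=
  lift2 (Multiplicative.ofAdd ((1 : ℤ), (0 : ℤ))) (Multiplicative.ofAdd ((0 : ℤ), (1 : ℤ)))
    comm_ker

@[simp] lemma abm_z0 : abm (z 0) = Multiplicative.ofAdd ((1 : ℤ), (0 : ℤ)) := lift2_z0 _ _ _
@[simp] lemma abm_z1 : abm (z 1) = Multiplicative.ofAdd ((0 : ℤ), (1 : ℤ)) := lift2_z1 _ _ _

lemma mem_commutator_of_abm {g : M2} (h : abm g = 1) : g ∈ commutator M2 := by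
  set Ψ : Multiplicative (ℤ × ℤ) →* Abelianization M2 :=
    MonoidHom.mk' (fun p => Abelianization.of (z 0) ^ (p.toAdd.1) *
      Abelianization.of (z 1) ^ (p.toAdd.2)) (by
        intro p q
        show Abelianization.of (z 0) ^ ((p.toAdd + q.toAdd).1) *
          Abelianization.of (z 1) ^ ((p.toAdd + q.toAdd).2) = _
        rw [Prod.fst_add, Prod.snd_add, zpow_add, zpow_add, mul_mul_mul_comm]) with hΨ
  have hid : Ψ.comp (Abelianization.lift abm) = MonoidHom.id (Abelianization M2) := by
    apply Abelianization.hom_ext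
    apply hom_ext
    · show Ψ (Abelianization.lift abm (Abelianization.of (z 0))) = Abelianization.of (z 0)
      rw [Abelianization.lift_apply_of, abm_z0]
      show Abelianization.of (z 0) ^ (1 : ℤ) * Abelianization.of (z 1) ^ (0 : ℤ) = _
      simp
    · show Ψ (Abelianization.lift abm (Abelianization.of (z 1))) = Abelianization.of (z 1)
      rw [Abelianization.lift_apply_of, abm_z1]
      show Abelianization.of (z 0) ^ (0 : ℤ) * Abelianization.of (z 1) ^ (1 : ℤ) = _
      simp
  have h1 : Abelianization.of g = 1 := by
    have hg := congrArg (fun F => F (Abelianization.of g)) hid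
    simp only [MonoidHom.comp_apply, MonoidHom.id_apply] at hg
    rw [Abelianization.lift_apply_of, h] at hg
    rw [← hg]
    simp [hΨ]
  exact (QuotientGroup.eq_one_iff g).mp h1

/-- Linear form on `ℤ × ℤ`. -/
def lin (σ τ : ℤ) : ℤ × ℤ →+ ℤ :=
  AddMonoidHom.mk' (fun p => σ * p.1 + τ * p.2) (by
    intro p q
    simp [Prod.fst_add, Prod.snd_add]
    ring)

@[simp] lemma lin_apply (σ τ : ℤ) (p : ℤ × ℤ) : lin σ τ p = σ * p.1 + τ * p.2 := rfl

/-- The homomorphism to the affine group of `R` with parameters `σ τ`. -/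
def phi (σ τ : ℤ) : M2 →* Aff R :=
  lift2 ⟨w ^ σ, 1⟩ ⟨w ^ τ, 1⟩ (fun f => Aff.map_derived_two f)

@[simp] lemma phi_z0 (σ τ : ℤ) : phi σ τ (z 0) = ⟨w ^ σ, 1⟩ := lift2_z0 _ _ _
@[simp] lemma phi_z1 (σ τ : ℤ) : phi σ τ (z 1) = ⟨w ^ τ, 1⟩ := lift2_z1 _ _ _

lemma phi_u (σ τ : ℤ) (g : M2) :
    (phi σ τ g).u = w ^ (σ * (abm g).toAdd.1 + τ * (abm g).toAdd.2) := by
  have hcomp : (Aff.uHom).comp (phi σ τ) =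
      (zpowersHom Rˣ w).comp ((AddMonoidHom.toMultiplicative (lin σ τ)).comp abm) := by
    apply hom_ext
    · simp
    · simp
  have hg := congrArg (fun F => F g) hcomp
  simp at hg
  rw [hg]
  congr 1
  ring

/-- The "translation-part" hom to `Aff ℤ`. -/
def iotaZ : Multiplicative ℤ →* Aff ℤ :=
  MonoidHom.mk' (fun x => ⟨1, x.toAdd⟩) (by
    intro p q
    ext
    · simp
    · simp)

@[simp] lemma iotaZ_apply (x : Multiplicative ℤ) : iotaZ x = ⟨1, x.toAdd⟩ := rfl

lemma units_map_eps_w : Units.map ((eps : R →+* ℤ) : R →* ℤ) w = 1 := by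
  ext
  simp

lemma phi_eps (σ τ : ℤ) (g : M2) :
    eps ((phi σ τ g).m) = (abm g).toAdd.1 + (abm g).toAdd.2 := by
  have hcomp : (Aff.mapHom eps).comp (phi σ τ) =
      iotaZ.comp ((AddMonoidHom.toMultiplicative (lin 1 1)).comp abm) := by
    apply hom_ext
    · simp only [MonoidHom.comp_apply, phi_z0]
      ext
      · simp [map_zpow, units_map_eps_w, one_zpow]
      · simp
    · simp only [MonoidHom.comp_apply, phi_z1]
      ext
      · simp [map_zpow, units_map_eps_w, one_zpow]
      · simp
  have hg := congrArg (fun F => (F g).m) hcomp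
  simpa using hg

/-- The master integer identity extracted from the commutator hypothesis. -/
lemma Ecore (g₁ g₂ : M2)
    (hyp : ⁅⁅⁅g₁, g₂⁆, g₂⁆, g₁⁆ = ⁅⁅⁅z 0, z 1⁆, z 1⁆, z 0⁆) (σ τ : ℤ) :
    (σ * (abm g₁).toAdd.1 + τ * (abm g₁).toAdd.2) *
        (σ * (abm g₂).toAdd.1 + τ * (abm g₂).toAdd.2) *
        ((σ * (abm g₁).toAdd.1 + τ * (abm g₁).toAdd.2) *
            ((abm g₂).toAdd.1 + (abm g₂).toAdd.2) -
          (σ * (abm g₂).toAdd.1 + τ * (abm g₂).toAdd.2) *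
            ((abm g₁).toAdd.1 + (abm g₁).toAdd.2)) = σ * τ * (σ - τ) := by
  have h := congrArg (phi σ τ) hyp
  simp only [map_commutatorElement] at h
  rw [Aff.quad, Aff.quad] at h
  have hm := congrArg Aff.m h
  simp only [phi_z0, phi_z1] at hm
  rw [phi_u σ τ g₁, phi_u σ τ g₂] at hm
  obtain ⟨m', hm'⟩ := decompose ((phi σ τ g₁).m)
  obtain ⟨n', hn'⟩ := decompose ((phi σ τ g₂).m)
  rw [phi_eps] at hm' hn'
  rw [key _ _ _ _ _ _ _ _ hm' hn'] at hm
  rw [key σ τ 1 1 1 1 0 0 (by simp) (by simp)] at hm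
  have hint := cast_t3_inj hm
  linear_combination hint

end MetabAux

end MetabAux

/-- In the free metabelian group `M₂` of rank 2 with basis `z₁, z₂`: if
`[g₁,g₂,g₂,g₁] = [z₁,z₂,z₂,z₁]`, then `gᵢ ≡ zᵢ^{εᵢ} (mod M₂')` with `εᵢ = ±1`. -/
theorem metabelian_commutator_rigidity (g₁ g₂ : FreeSolvable 2 2)
    (hyp : ⁅⁅⁅g₁, g₂⁆, g₂⁆, g₁⁆ =
      ⁅⁅⁅FreeSolvable.gen 2 2 0, FreeSolvable.gen 2 2 1⁆, FreeSolvable.gen 2 2 1⁆,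
        FreeSolvable.gen 2 2 0⁆) :
    ∃ ε₁ ε₂ : ℤ, (ε₁ = 1 ∨ ε₁ = -1) ∧ (ε₂ = 1 ∨ ε₂ = -1) ∧
      g₁ * ((FreeSolvable.gen 2 2 0) ^ ε₁)⁻¹ ∈ commutator (FreeSolvable 2 2) ∧
      g₂ * ((FreeSolvable.gen 2 2 1) ^ ε₂)⁻¹ ∈ commutator (FreeSolvable 2 2) := by
  classical
  set a : ℤ := ((MetabAux.abm g₁).toAdd).1 with ha_def
  set b : ℤ := ((MetabAux.abm g₁).toAdd).2 with hb_def
  set c : ℤ := ((MetabAux.abm g₂).toAdd).1 with hc_def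
  set d : ℤ := ((MetabAux.abm g₂).toAdd).2 with hd_def
  have E1 := MetabAux.Ecore g₁ g₂ hyp 1 0
  have E2 := MetabAux.Ecore g₁ g₂ hyp 0 1
  have E3 := MetabAux.Ecore g₁ g₂ hyp 1 (-1)
  rw [← ha_def, ← hb_def, ← hc_def, ← hd_def] at E1 E2 E3
  -- abbreviate e = ad - bc
  have h1 : a * c * (a * d - b * c) = 0 := by linear_combination E1
  have h2 : b * d * (a * d - b * c) = 0 := by linear_combination -E2
  have h3 : 2 * ((a - b) * (c - d) * (a * d - b * c)) = -2 := by linear_combination E3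
  have h3' : (a - b) * (c - d) * (a * d - b * c) = -1 := by linarith
  have h4 : (a * d - b * c) * (a * d + b * c) = 1 := by linear_combination -h3' + h1 + h2
  -- deduce the shape of (a, b, c, d)
  have hcase := Int.mul_eq_one_iff_eq_one_or_neg_one.mp h4
  have hbc : b * c = 0 := by
    rcases hcase with ⟨he, hs⟩ | ⟨he, hs⟩ <;> linarith
  have had : a * d = 1 ∨ a * d = -1 := by
    rcases hcase with ⟨he, hs⟩ | ⟨he, hs⟩
    · left; linarith
    · right; linarith
  have hane : a = 1 ∨ a = -1 := by
    rcases had with h | h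
    · rcases Int.mul_eq_one_iff_eq_one_or_neg_one.mp h with ⟨h', _⟩ | ⟨h', _⟩ <;> tauto
    · have h' : a * (-d) = 1 := by linarith
      rcases Int.mul_eq_one_iff_eq_one_or_neg_one.mp h' with ⟨h'', _⟩ | ⟨h'', _⟩ <;> tauto
  have hdne : d = 1 ∨ d = -1 := by
    rcases had with h | h
    · have h' : d * a = 1 := by linarith
      rcases Int.mul_eq_one_iff_eq_one_or_neg_one.mp h' with ⟨h'', _⟩ | ⟨h'', _⟩ <;> tauto
    · have h' : d * (-a) = 1 := by linarith
      rcases Int.mul_eq_one_iff_eq_one_or_neg_one.mp h' with ⟨h'', _⟩ | ⟨h'', _⟩ <;> tauto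
  have he : a * d - b * c = 1 ∨ a * d - b * c = -1 := by
    rcases hcase with ⟨he', _⟩ | ⟨he', _⟩ <;> tauto
  have hac : a * c = 0 := by
    rcases he with h | h
    · have := h1; rw [h] at this; linarith
    · have := h1; rw [h] at this; linarith
  have hbd : b * d = 0 := by
    rcases he with h | h
    · have := h2; rw [h] at this; linarith
    · have := h2; rw [h] at this; linarith
  have hc0 : c = 0 := by
    rcases hane with h | h <;> rw [h] at hac <;> linarith
  have hb0 : b = 0 := by
    rcases hdne with h | h <;> rw [h] at hbd <;> linarith
  refine ⟨a, d, hane, hdne, ?_, ?_⟩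
  · apply MetabAux.mem_commutator_of_abm
    have habm1 : MetabAux.abm g₁ = Multiplicative.ofAdd (a, b) := by
      rw [ha_def, hb_def]; simp
    rw [map_mul, map_inv, map_zpow]
    rw [show MetabAux.abm (FreeSolvable.gen 2 2 0) =
      Multiplicative.ofAdd ((1 : ℤ), (0 : ℤ)) from MetabAux.abm_z0]
    rw [habm1, hb0]
    apply Multiplicative.toAdd.injective
    simp [Prod.ext_iff]
  · apply MetabAux.mem_commutator_of_abm
    have habm2 : MetabAux.abm g₂ = Multiplicative.ofAdd (c, d) := by
      rw [hc_def, hd_def]; simp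
    rw [map_mul, map_inv, map_zpow]
    rw [show MetabAux.abm (FreeSolvable.gen 2 2 1) =
      Multiplicative.ofAdd ((0 : ℤ), (1 : ℤ)) from MetabAux.abm_z1]
    rw [habm2, hc0]
    apply Multiplicative.toAdd.injective
    simp [Prod.ext_iff]
end

section
/- In the free group F_r, the map from a finitely generated group to its abelianization carries bases to bases: any basis of the free abelian group F_r/F_r' lifts to a basis of F_r. More generally, in the free solvable group G = S_{r,d}, every basis of the abelianization G/G' is induced by some basis of G. -/
open Matrix

namespace LiftBasisAux

variable {r : ℕ}

/-- Sign-flip elementary matrix. -/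
def sgn (i : Fin r) : Matrix (Fin r) (Fin r) ℤ :=
  Matrix.diagonal (fun j => if j = i then -1 else 1)

/-- Elementary matrices: transvections and sign flips. -/
def Elem (B : Matrix (Fin r) (Fin r) ℤ) : Prop :=
  (∃ i j c, i ≠ j ∧ B = Matrix.transvection i j c) ∨ ∃ i, B = sgn i

lemma sgn_mul_apply (i : Fin r) (M : Matrix (Fin r) (Fin r) ℤ) (a b : Fin r) :
    (sgn i * M) a b = (if a = i then -1 else 1) * M a b := by
  simp [sgn, Matrix.diagonal_mul]

lemma rowop_apply (i j : Fin r) (c : ℤ) (M : Matrix (Fin r) (Fin r) ℤ) (a b : Fin r) :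
    (Matrix.transvection i j c * M) a b = M a b + (if a = i then c * M j b else 0) := by
  rcases eq_or_ne a i with rfl | h
  · simp
  · simp [h, Matrix.transvection_mul_apply_of_ne _ _ _ _ h]

lemma sgn_mul_sgn (i : Fin r) : sgn i * sgn i = 1 := by
  ext a b
  rw [sgn, Matrix.diagonal_mul_diagonal]
  rcases eq_or_ne a b with rfl | h
  · by_cases h2 : a = i <;> simp [h2]
  · simp [Matrix.diagonal_apply_ne _ h, Matrix.one_apply_ne h]

lemma elem_isUnit_det {B : Matrix (Fin r) (Fin r) ℤ} (h : Elem B) : IsUnit B.det := by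
  rcases h with ⟨i, j, c, hij, rfl⟩ | ⟨i, rfl⟩
  · rw [Matrix.det_transvection_of_ne _ _ hij]; exact isUnit_one
  · exact Matrix.isUnit_det_of_left_inverse (sgn_mul_sgn i)

lemma elem_inv {B : Matrix (Fin r) (Fin r) ℤ} (h : Elem B) :
    ∃ B', Elem B' ∧ B' * B = 1 ∧ B * B' = 1 := by
  rcases h with ⟨i, j, c, hij, rfl⟩ | ⟨i, rfl⟩
  · refine ⟨Matrix.transvection i j (-c), Or.inl ⟨i, j, -c, hij, rfl⟩, ?_, ?_⟩ <;>
      rw [Matrix.transvection_mul_transvection_same _ _ hij] <;> simp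
  · exact ⟨sgn i, Or.inr ⟨i, rfl⟩, sgn_mul_sgn i, sgn_mul_sgn i⟩

lemma list_prod_isUnit_det {L : List (Matrix (Fin r) (Fin r) ℤ)}
    (h : ∀ B ∈ L, Elem B) : IsUnit L.prod.det := by
  induction L with
  | nil => simp
  | cons B T ih =>
      rw [List.prod_cons, Matrix.det_mul]
      exact (elem_isUnit_det (h B (by simp))).mul (ih fun C hC => h C (by simp [hC]))

lemma list_inv {L : List (Matrix (Fin r) (Fin r) ℤ)} (h : ∀ B ∈ L, Elem B) :
    ∃ L' : List (Matrix (Fin r) (Fin r) ℤ), (∀ B ∈ L', Elem B) ∧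
      L'.prod * L.prod = 1 ∧ L.prod * L'.prod = 1 := by
  induction L with
  | nil => exact ⟨[], by simp, by simp, by simp⟩
  | cons B T ih =>
      obtain ⟨T', hT', h1, h2⟩ := ih (fun C hC => h C (by simp [hC]))
      obtain ⟨B', hB', hb1, hb2⟩ := elem_inv (h B (by simp))
      refine ⟨T' ++ [B'], ?_, ?_, ?_⟩
      · intro C hC
        rcases List.mem_append.1 hC with hC | hC
        · exact hT' C hC
        · simp only [List.mem_singleton] at hC; subst hC; exact hB'
      · simp only [List.prod_append, List.prod_cons, List.prod_nil, mul_one]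
        calc (T'.prod * B') * (B * T.prod) = T'.prod * ((B' * B) * T.prod) := by
              noncomm_ring
          _ = 1 := by rw [hb1, one_mul, h1]
      · simp only [List.prod_append, List.prod_cons, List.prod_nil, mul_one]
        calc (B * T.prod) * (T'.prod * B') = B * ((T.prod * T'.prod) * B') := by
              noncomm_ring
          _ = 1 := by rw [h2, one_mul, hb2]

/-- The invariant: the first `k` columns agree with the identity matrix. -/
def Inv (A : Matrix (Fin r) (Fin r) ℤ) (k : ℕ) : Prop :=
  ∀ i j : Fin r, (j : ℕ) < k → A i j = if i = j then 1 else 0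

/-- Divisibility of the determinant by the pivot. -/
lemma diag_dvd_det : ∀ (n : ℕ) (A : Matrix (Fin n) (Fin n) ℤ) (k : Fin n),
    (∀ i j : Fin n, j < k → A i j = if i = j then 1 else 0) →
    (∀ i : Fin n, k < i → A i k = 0) → A k k ∣ A.det := by
  intro n
  induction n with
  | zero => exact fun A k => k.elim0
  | succ n ih =>
      intro A k hinv h0
      rcases Fin.eq_zero_or_eq_succ k with rfl | ⟨j, rfl⟩
      · rw [Matrix.det_succ_column_zero]
        rw [Finset.sum_eq_single 0]
        · simpa using dvd_mul_right (A 0 0) _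
        · intro i _ hi
          rw [h0 i (by simpa using Fin.pos_iff_ne_zero.2 hi)]
          ring
        · simp
      · -- k = j.succ, column 0 is the identity column
        have hcol0 : ∀ i : Fin (n+1), A i 0 = if i = 0 then 1 else 0 := by
          intro i; exact hinv i 0 (Fin.succ_pos j)
        rw [Matrix.det_succ_column_zero, Finset.sum_eq_single 0]
        · have hA00 : A 0 0 = 1 := by simpa using hcol0 0
          rw [hA00]
          simp only [Fin.val_zero, pow_zero, one_mul, mul_one]
          have := ih (A.submatrix Fin.succ Fin.succ) j
            (fun i j' hj' => by
              have := hinv i.succ j'.succ (Fin.succ_lt_succ_iff.2 hj')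
              simpa [Fin.succ_inj] using this)
            (fun i hi => h0 i.succ (Fin.succ_lt_succ_iff.2 hi))
          simpa [Fin.succAbove_zero] using this
        · intro i _ hi
          rw [hcol0 i, if_neg hi]; ring
        · simp

/-- Measure: sum of absolute values of the column `k` strictly below the diagonal. -/
def colMeasure (A : Matrix (Fin r) (Fin r) ℤ) (k : Fin r) : ℕ :=
  ∑ i : Fin r, if k < i then (A i k).natAbs else 0

lemma swap_entries (i j : Fin r) (h : i ≠ j) (M : Matrix (Fin r) (Fin r) ℤ) (a b : Fin r) :
    ((Matrix.transvection i j 1 *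
        (Matrix.transvection j i (-1) * (Matrix.transvection i j 1 * M)) :
        Matrix (Fin r) (Fin r) ℤ)) a b
      = if a = i then M j b else if a = j then -(M i b) else M a b := by
  simp only [rowop_apply]
  by_cases hai : a = i
  · subst hai
    simp [h, Ne.symm h]
  · by_cases haj : a = j
    · subst haj
      simp [h, Ne.symm h, hai]
    · simp [hai, haj]

lemma inv_of_rowop {A : Matrix (Fin r) (Fin r) ℤ} {m : ℕ} (hinv : Inv A m)
    (i j : Fin r) (c : ℤ) (hjm : m ≤ (j : ℕ)) :
    Inv (Matrix.transvection i j c * A) m := by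
  intro a b hb
  rw [rowop_apply]
  have hjb : A j b = 0 := by
    rw [hinv j b hb, if_neg]
    intro hh
    subst hh
    omega
  rcases eq_or_ne a i with rfl | hne
  · rw [hinv a b hb, hjb]; simp
  · rw [hinv a b hb, if_neg hne]; simp

lemma euclid_step (k iR : Fin r) (hki : k < iR) (A : Matrix (Fin r) (Fin r) ℤ)
    (hA : A iR k ≠ 0) :
    ∃ L : List (Matrix (Fin r) (Fin r) ℤ), (∀ B ∈ L, Elem B) ∧
      (∀ m : ℕ, m ≤ (k : ℕ) → Inv A m → Inv (L.prod * A) m) ∧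
      colMeasure (L.prod * A) k < colMeasure A k := by
  have hik : iR ≠ k := (ne_of_gt hki)
  have hki' : k ≠ iR := (ne_of_lt hki)
  set c : ℤ := -(A k k / A iR k) with hc
  refine ⟨[Matrix.transvection k iR 1, Matrix.transvection iR k (-1),
      Matrix.transvection k iR 1, Matrix.transvection k iR c], ?_, ?_, ?_⟩
  · intro B hB
    simp only [List.mem_cons, List.not_mem_nil, or_false] at hB
    rcases hB with rfl | rfl | rfl | rfl
    · exact Or.inl ⟨k, iR, 1, hki', rfl⟩
    · exact Or.inl ⟨iR, k, -1, hik, rfl⟩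
    · exact Or.inl ⟨k, iR, 1, hki', rfl⟩
    · exact Or.inl ⟨k, iR, c, hki', rfl⟩
  · intro m hm hinv
    have h1 : Inv (Matrix.transvection k iR c * A) m :=
      inv_of_rowop hinv _ _ _ (le_trans hm (le_of_lt hki))
    have h2 := inv_of_rowop h1 k iR 1 (le_trans hm (le_of_lt hki))
    have h3 := inv_of_rowop h2 iR k (-1) hm
    have h4 := inv_of_rowop h3 k iR 1 (le_trans hm (le_of_lt hki))
    simpa [List.prod_cons, List.prod_nil, Matrix.mul_assoc] using h4
  · -- measure decreases
    set M : Matrix (Fin r) (Fin r) ℤ := Matrix.transvection k iR c * A with hM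
    have hMk : M k k = A k k % A iR k := by
      rw [hM, rowop_apply, if_pos rfl, hc, Int.emod_def]
      ring
    have hMrow : ∀ a b, a ≠ k → M a b = A a b := by
      intro a b ha
      rw [hM, rowop_apply, if_neg ha, add_zero]
    have key : ∀ a b, (([Matrix.transvection k iR 1, Matrix.transvection iR k (-1),
        Matrix.transvection k iR 1, Matrix.transvection k iR c].prod * A)) a b
          = if a = k then M iR b else if a = iR then -(M k b) else M a b := by
      intro a b
      simp only [List.prod_cons, List.prod_nil, mul_one, Matrix.mul_assoc]
      rw [← hM]
      exact swap_entries k iR hki' M a b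
    rw [colMeasure, colMeasure]
    apply Finset.sum_lt_sum
    · intro i _
      by_cases hik2 : k < i
      · rw [if_pos hik2, if_pos hik2]
        rcases eq_or_ne i iR with rfl | hiR
        · rw [key, if_neg hik, if_pos rfl]
          have h1 : 0 ≤ A k k % A i k := Int.emod_nonneg _ hA
          have h2 : A k k % A i k < |A i k| := Int.emod_lt_abs _ hA
          rw [Int.natAbs_neg, hMk]
          refine le_of_lt ?_
          calc (A k k % A i k).natAbs < (|A i k|).natAbs :=
                Int.natAbs_lt_natAbs_of_nonneg_of_lt h1 h2
            _ = (A i k).natAbs := Int.natAbs_abs _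
        · rw [key, if_neg (ne_of_gt hik2), if_neg hiR, hMrow i k (ne_of_gt hik2)]
      · rw [if_neg hik2, if_neg hik2]
    · refine ⟨iR, Finset.mem_univ _, ?_⟩
      rw [if_pos hki, if_pos hki, key, if_neg hik, if_pos rfl, Int.natAbs_neg, hMk]
      have h1 : 0 ≤ A k k % A iR k := Int.emod_nonneg _ hA
      have h2 : A k k % A iR k < |A iR k| := Int.emod_lt_abs _ hA
      calc (A k k % A iR k).natAbs < (|A iR k|).natAbs :=
            Int.natAbs_lt_natAbs_of_nonneg_of_lt h1 h2
        _ = (A iR k).natAbs := Int.natAbs_abs _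

lemma euclid : ∀ (m : ℕ) (k : Fin r) (A : Matrix (Fin r) (Fin r) ℤ),
    Inv A (k : ℕ) → colMeasure A k ≤ m →
    ∃ L : List (Matrix (Fin r) (Fin r) ℤ), (∀ B ∈ L, Elem B) ∧
      Inv (L.prod * A) (k : ℕ) ∧ (∀ i, k < i → (L.prod * A) i k = 0) := by
  intro m
  induction m with
  | zero =>
      intro k A hinv hm
      refine ⟨[], by simp, by simpa using hinv, ?_⟩
      intro i hi
      have hz : colMeasure A k = 0 := Nat.le_zero.1 hm
      have := (Finset.sum_eq_zero_iff.1 hz) i (Finset.mem_univ i)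
      rw [if_pos hi] at this
      simpa [List.prod_nil, Int.natAbs_eq_zero] using this
  | succ m ih =>
      intro k A hinv hm
      by_cases hz : ∀ i, k < i → A i k = 0
      · exact ⟨[], by simp, by simpa using hinv, by simpa using hz⟩
      · push_neg at hz
        obtain ⟨iR, hki, hA⟩ := hz
        obtain ⟨L1, hL1, hL1inv, hL1m⟩ := euclid_step k iR hki A hA
        have hm1 : colMeasure (L1.prod * A) k ≤ m := by omega
        obtain ⟨L2, hL2, hL2inv, hL2z⟩ := ih k (L1.prod * A)
          (hL1inv _ (le_refl _) hinv) hm1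
        refine ⟨L2 ++ L1, ?_, ?_, ?_⟩
        · intro B hB
          rcases List.mem_append.1 hB with hB | hB
          · exact hL2 B hB
          · exact hL1 B hB
        · rw [List.prod_append, Matrix.mul_assoc]; exact hL2inv
        · intro i hi
          rw [List.prod_append, Matrix.mul_assoc]; exact hL2z i hi

lemma pivot_fix (k : Fin r) (A : Matrix (Fin r) (Fin r) ℤ) (hdet : IsUnit A.det)
    (hinv : Inv A (k : ℕ)) (h0 : ∀ i, k < i → A i k = 0) :
    ∃ L : List (Matrix (Fin r) (Fin r) ℤ), (∀ B ∈ L, Elem B) ∧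
      Inv (L.prod * A) (k : ℕ) ∧ (∀ i, k < i → (L.prod * A) i k = 0) ∧
      (L.prod * A) k k = 1 := by
  have hdvd : A k k ∣ A.det :=
    diag_dvd_det r A k (fun i j hj => hinv i j (by exact hj)) h0
  have hu : IsUnit (A k k) := isUnit_of_dvd_unit hdvd hdet
  rcases Int.isUnit_iff.1 hu with h1 | h1
  · exact ⟨[], by simp, by simpa using hinv, by simpa using h0, by simpa using h1⟩
  · refine ⟨[sgn k], ?_, ?_, ?_, ?_⟩
    · intro B hB
      simp only [List.mem_singleton] at hB
      exact hB ▸ Or.inr ⟨k, rfl⟩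
    · intro a b hb
      rw [List.prod_singleton, sgn_mul_apply, hinv a b hb]
      rcases eq_or_ne a k with rfl | ha
      · have : a ≠ b := by
          intro hh; subst hh; omega
        simp [this]
      · simp [ha]
    · intro i hi
      rw [List.prod_singleton, sgn_mul_apply, h0 i hi, mul_zero]
    · rw [List.prod_singleton, sgn_mul_apply, if_pos rfl, h1]; ring

lemma clear_above (k : Fin r) : ∀ (n s : ℕ) (A : Matrix (Fin r) (Fin r) ℤ),
    (k : ℕ) ≤ s + n → Inv A (k : ℕ) → (∀ i, k < i → A i k = 0) → A k k = 1 →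
    (∀ i : Fin r, (i : ℕ) < s → A i k = 0) →
    ∃ L : List (Matrix (Fin r) (Fin r) ℤ), (∀ B ∈ L, Elem B) ∧
      Inv (L.prod * A) ((k : ℕ) + 1) := by
  intro n
  induction n with
  | zero =>
      intro s A hks hinv h0 hkk hs
      refine ⟨[], by simp, ?_⟩
      intro i j hj
      rcases Nat.lt_or_ge (j : ℕ) (k : ℕ) with hjk | hjk
      · simpa using hinv i j hjk
      · have hjk2 : j = k := by
          apply Fin.ext; omega
        subst hjk2
        simp only [List.prod_nil, one_mul]
        rcases lt_trichotomy i j with hij | rfl | hij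
        · rw [hs i (by omega), if_neg (ne_of_lt hij)]
        · rw [hkk, if_pos rfl]
        · rw [h0 i hij, if_neg (ne_of_gt hij)]
  | succ n ih =>
      intro s A hks hinv h0 hkk hs
      rcases Nat.lt_or_ge s (k : ℕ) with hsk | hsk
      · -- clear row s
        have hsr : s < r := lt_trans hsk k.isLt
        set iS : Fin r := ⟨s, hsr⟩ with hiS
        have hiSk : iS ≠ k := by
          intro hh
          rw [Fin.ext_iff] at hh
          simp only [hiS] at hh
          omega
        set M : Matrix (Fin r) (Fin r) ℤ := Matrix.transvection iS k (-(A iS k)) * A with hMdef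
        have hMrow : ∀ a b, a ≠ iS → M a b = A a b := by
          intro a b ha
          rw [hMdef, rowop_apply, if_neg ha, add_zero]
        have hMinv : Inv M (k : ℕ) := inv_of_rowop hinv _ _ _ (le_refl _)
        have hM0 : ∀ i, k < i → M i k = 0 := by
          intro i hi
          rw [hMrow i k (by
            intro hh; subst hh
            rw [Fin.lt_def] at hi
            simp only [hiS] at hi
            omega)]
          exact h0 i hi
        have hMkk : M k k = 1 := by rw [hMrow k k (Ne.symm hiSk)]; exact hkk
        have hMs : ∀ i : Fin r, (i : ℕ) < s + 1 → M i k = 0 := by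
          intro i hi
          rcases Nat.lt_or_ge (i : ℕ) s with his | his
          · rw [hMrow i k (by
              intro hh; subst hh; simp [hiS] at his)]
            exact hs i his
          · have : i = iS := by apply Fin.ext; simp [hiS]; omega
            subst this
            rw [hMdef, rowop_apply, if_pos rfl, hkk]
            ring
        obtain ⟨L2, hL2, hL2inv⟩ := ih (s + 1) M (by omega) hMinv hM0 hMkk hMs
        refine ⟨L2 ++ [Matrix.transvection iS k (-(A iS k))], ?_, ?_⟩
        · intro B hB
          rcases List.mem_append.1 hB with hB | hB
          · exact hL2 B hB
          · simp only [List.mem_singleton] at hB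
            exact hB ▸ Or.inl ⟨iS, k, _, hiSk, rfl⟩
        · rw [List.prod_append, List.prod_singleton, Matrix.mul_assoc, ← hMdef]
          exact hL2inv
      · exact ih s A (by omega) hinv h0 hkk hs

lemma col_step (k : Fin r) (A : Matrix (Fin r) (Fin r) ℤ) (hdet : IsUnit A.det)
    (hinv : Inv A (k : ℕ)) :
    ∃ L : List (Matrix (Fin r) (Fin r) ℤ), (∀ B ∈ L, Elem B) ∧
      Inv (L.prod * A) ((k : ℕ) + 1) := by
  obtain ⟨L1, hL1, hL1inv, hL1z⟩ := euclid (colMeasure A k) k A hinv (le_refl _)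
  have hdet1 : IsUnit (L1.prod * A).det := by
    rw [Matrix.det_mul]
    exact (list_prod_isUnit_det hL1).mul hdet
  obtain ⟨L2, hL2, hL2inv, hL2z, hL2kk⟩ := pivot_fix k (L1.prod * A) hdet1 hL1inv hL1z
  obtain ⟨L3, hL3, hL3inv⟩ := clear_above k (k : ℕ) 0 (L2.prod * (L1.prod * A))
    (by omega) hL2inv hL2z hL2kk (by omega)
  refine ⟨L3 ++ L2 ++ L1, ?_, ?_⟩
  · intro B hB
    rcases List.mem_append.1 hB with hB | hB
    · rcases List.mem_append.1 hB with hB | hB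
      · exact hL3 B hB
      · exact hL2 B hB
    · exact hL1 B hB
  · have heq : (L3 ++ L2 ++ L1).prod * A = L3.prod * (L2.prod * (L1.prod * A)) := by
      rw [List.prod_append, List.prod_append, Matrix.mul_assoc, Matrix.mul_assoc]
    rw [heq]
    exact hL3inv

lemma reduce_aux : ∀ (t k : ℕ), k + t = r →
    ∀ A : Matrix (Fin r) (Fin r) ℤ, IsUnit A.det → Inv A k →
    ∃ L : List (Matrix (Fin r) (Fin r) ℤ), (∀ B ∈ L, Elem B) ∧ L.prod * A = 1 := by
  intro t
  induction t with
  | zero =>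
      intro k hk A _ hinv
      refine ⟨[], by simp, ?_⟩
      rw [List.prod_nil, one_mul]
      ext i j
      rw [hinv i j (by omega), Matrix.one_apply]
  | succ t ih =>
      intro k hk A hdet hinv
      have hkr : k < r := by omega
      obtain ⟨L1, hL1, hL1inv⟩ := col_step ⟨k, hkr⟩ A hdet hinv
      have hdet1 : IsUnit (L1.prod * A).det := by
        rw [Matrix.det_mul]
        exact (list_prod_isUnit_det hL1).mul hdet
      obtain ⟨L2, hL2, hL2eq⟩ := ih (k + 1) (by omega) (L1.prod * A) hdet1 hL1inv
      refine ⟨L2 ++ L1, ?_, ?_⟩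
      · intro B hB
        rcases List.mem_append.1 hB with hB | hB
        · exact hL2 B hB
        · exact hL1 B hB
      · rw [List.prod_append, Matrix.mul_assoc]
        exact hL2eq

/-- Every invertible integer matrix is a product of elementary matrices. -/
theorem elem_factorization (A : Matrix (Fin r) (Fin r) ℤ) (hdet : IsUnit A.det) :
    ∃ L : List (Matrix (Fin r) (Fin r) ℤ), (∀ B ∈ L, Elem B) ∧ L.prod = A := by
  obtain ⟨L, hL, hLe⟩ := reduce_aux r 0 (by omega) A hdet (fun i j hj => by omega)
  obtain ⟨L', hL', h1, _⟩ := list_inv hL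
  refine ⟨L', hL', ?_⟩
  calc L'.prod = L'.prod * (L.prod * A) := by rw [hLe, mul_one]
    _ = (L'.prod * L.prod) * A := by rw [Matrix.mul_assoc]
    _ = A := by rw [h1, one_mul]

/-! ### Lifting automorphisms of the abelianization of the free group -/

variable (r)

/-- Canonical generators of the abelianization of the free group. -/
noncomputable def xgen (i : Fin r) : Abelianization (FreeGroup (Fin r)) :=
  Abelianization.of (FreeGroup.of i)

/-- Coordinates of an element of the abelianized free group. -/
noncomputable def coordsHom : Abelianization (FreeGroup (Fin r)) →* Multiplicative (Fin r →₀ ℤ) :=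
  Abelianization.lift (FreeGroup.lift (fun i => Multiplicative.ofAdd (Finsupp.single i 1)))

lemma coordsHom_xgen (i : Fin r) :
    coordsHom r (xgen r i) = Multiplicative.ofAdd (Finsupp.single i 1) := by
  simp [coordsHom, xgen]

/-- Inverse of the coordinates map. -/
noncomputable def coordsInv : Multiplicative (Fin r →₀ ℤ) →* Abelianization (FreeGroup (Fin r)) :=
  AddMonoidHom.toMultiplicativeLeft
    (Finsupp.liftAddHom
      (fun i => (zmultiplesHom (Additive (Abelianization (FreeGroup (Fin r)))))
        (Additive.ofMul (xgen r i))))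

lemma coordsInv_single (i : Fin r) :
    coordsInv r (Multiplicative.ofAdd (Finsupp.single i 1)) = xgen r i := by
  simp [coordsInv, AddMonoidHom.toMultiplicativeLeft, Finsupp.liftAddHom_apply_single]

lemma coordsInv_coordsHom (m : Abelianization (FreeGroup (Fin r))) :
    coordsInv r (coordsHom r m) = m := by
  have h : (coordsInv r).comp (coordsHom r) = MonoidHom.id _ := by
    apply Abelianization.hom_ext
    apply FreeGroup.ext_hom
    intro i
    show coordsInv r (coordsHom r (xgen r i)) = Abelianization.of (FreeGroup.of i)
    rw [coordsHom_xgen, coordsInv_single]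
    rfl
  exact DFunLike.congr_fun h m

lemma coordsHom_injective : Function.Injective (coordsHom r) := by
  intro a b h
  rw [← coordsInv_coordsHom r a, ← coordsInv_coordsHom r b, h]

/-- Coordinates as a function. -/
noncomputable def coordsFn : Abelianization (FreeGroup (Fin r)) →* Multiplicative (Fin r → ℤ) :=
  (AddMonoidHom.toMultiplicative
    (Finsupp.coeFnAddHom : (Fin r →₀ ℤ) →+ (Fin r → ℤ))).comp (coordsHom r)

lemma coordsFn_injective : Function.Injective (coordsFn r) := by
  intro a b h
  apply coordsHom_injective r
  apply Multiplicative.toAdd.injective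
  have h2 : ⇑(Multiplicative.toAdd (coordsHom r a))
      = ⇑(Multiplicative.toAdd (coordsHom r b)) := congrArg Multiplicative.toAdd h
  exact DFunLike.coe_injective h2

lemma coordsFn_xgen (i : Fin r) :
    coordsFn r (xgen r i) = Multiplicative.ofAdd (Pi.single i 1) := by
  rw [coordsFn, MonoidHom.comp_apply, coordsHom_xgen]
  exact congrArg Multiplicative.ofAdd (Finsupp.single_eq_pi_single i 1)

/-- The matrix of an endomorphism of the abelianized free group. -/
noncomputable def matOf (φ : Abelianization (FreeGroup (Fin r)) →* Abelianization (FreeGroup (Fin r))) :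
    Matrix (Fin r) (Fin r) ℤ :=
  Matrix.of fun p q => Multiplicative.toAdd (coordsFn r (φ (xgen r q))) p

lemma coords_map (φ : Abelianization (FreeGroup (Fin r)) →* Abelianization (FreeGroup (Fin r)))
    (m : Abelianization (FreeGroup (Fin r))) :
    Multiplicative.toAdd (coordsFn r (φ m))
      = (matOf r φ).mulVec (Multiplicative.toAdd (coordsFn r m)) := by
  have h : (coordsFn r).comp φ
      = (AddMonoidHom.toMultiplicative
          (Matrix.mulVecLin (matOf r φ)).toAddMonoidHom).comp (coordsFn r) := by
    apply Abelianization.hom_ext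
    apply FreeGroup.ext_hom
    intro q
    show coordsFn r (φ (xgen r q))
      = AddMonoidHom.toMultiplicative (Matrix.mulVecLin (matOf r φ)).toAddMonoidHom
          (coordsFn r (xgen r q))
    rw [coordsFn_xgen]
    apply Multiplicative.toAdd.injective
    funext p
    show Multiplicative.toAdd (coordsFn r (φ (xgen r q))) p
      = (matOf r φ).mulVec (Pi.single q 1) p
    rw [Matrix.mulVec_single]
    simp [matOf]
  have h2 := DFunLike.congr_fun h m
  exact congrArg Multiplicative.toAdd h2

lemma matOf_id : matOf r (MonoidHom.id _) = 1 := by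
  ext p q
  show Multiplicative.toAdd (coordsFn r (xgen r q)) p = (1 : Matrix (Fin r) (Fin r) ℤ) p q
  rw [coordsFn_xgen]
  rcases eq_or_ne p q with rfl | h
  · simp [Matrix.one_apply]
  · simp [Matrix.one_apply, h, Pi.single_apply]

lemma matOf_comp (φ ψ : Abelianization (FreeGroup (Fin r)) →* Abelianization (FreeGroup (Fin r))) :
    matOf r (φ.comp ψ) = matOf r φ * matOf r ψ := by
  ext p q
  show Multiplicative.toAdd (coordsFn r (φ (ψ (xgen r q)))) p = _
  rw [coords_map r φ (ψ (xgen r q))]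
  rfl

lemma matOf_inj {φ ψ : Abelianization (FreeGroup (Fin r)) →* Abelianization (FreeGroup (Fin r))}
    (h : matOf r φ = matOf r ψ) : φ = ψ := by
  apply Abelianization.hom_ext
  apply FreeGroup.ext_hom
  intro i
  show φ (xgen r i) = ψ (xgen r i)
  apply coordsFn_injective r
  apply Multiplicative.toAdd.injective
  funext p
  exact congrFun (congrFun (congrArg (fun (X : Matrix (Fin r) (Fin r) ℤ) => (X : Fin r → Fin r → ℤ)) h) p) i

/-! ### Elementary automorphisms of the free group -/

/-- The endomorphism of the free group sending `of q ↦ of q * (of p)^c`. -/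
def tvHom (p q : Fin r) (c : ℤ) : FreeGroup (Fin r) →* FreeGroup (Fin r) :=
  FreeGroup.lift (fun t => if t = q then FreeGroup.of q * (FreeGroup.of p) ^ c
    else FreeGroup.of t)

lemma tvHom_of_ne (p q : Fin r) (c : ℤ) {t : Fin r} (ht : t ≠ q) :
    tvHom r p q c (FreeGroup.of t) = FreeGroup.of t := by
  simp [tvHom, ht]

lemma tvHom_of_eq (p q : Fin r) (c : ℤ) :
    tvHom r p q c (FreeGroup.of q) = FreeGroup.of q * (FreeGroup.of p) ^ c := by
  simp [tvHom]

lemma tvHom_comp (p q : Fin r) (hpq : p ≠ q) (c d : ℤ) :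
    (tvHom r p q c).comp (tvHom r p q d) = tvHom r p q (c + d) := by
  apply FreeGroup.ext_hom
  intro t
  rcases eq_or_ne t q with rfl | ht
  · rw [MonoidHom.comp_apply, tvHom_of_eq, _root_.map_mul, _root_.map_zpow, tvHom_of_eq,
      tvHom_of_ne r p _ c hpq, tvHom_of_eq, _root_.zpow_add]
    group
  · rw [MonoidHom.comp_apply, tvHom_of_ne r p q d ht, tvHom_of_ne r p q c ht,
      tvHom_of_ne r p q (c + d) ht]

/-- Elementary "transvection" automorphism of the free group. -/
def tvAut (p q : Fin r) (c : ℤ) (hpq : p ≠ q) :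
    FreeGroup (Fin r) ≃* FreeGroup (Fin r) :=
  MonoidHom.toMulEquiv (tvHom r p q c) (tvHom r p q (-c))
    (by rw [tvHom_comp r p q hpq]; simp only [neg_add_cancel]
        apply FreeGroup.ext_hom; intro t
        rcases eq_or_ne t q with rfl | ht
        · rw [tvHom_of_eq]; simp
        · rw [tvHom_of_ne r p q 0 ht]; rfl)
    (by rw [tvHom_comp r p q hpq]; simp only [add_neg_cancel]
        apply FreeGroup.ext_hom; intro t
        rcases eq_or_ne t q with rfl | ht
        · rw [tvHom_of_eq]; simp
        · rw [tvHom_of_ne r p q 0 ht]; rfl)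

/-- Sign-flip endomorphism of the free group. -/
def sgnHom (i : Fin r) : FreeGroup (Fin r) →* FreeGroup (Fin r) :=
  FreeGroup.lift (fun t => if t = i then (FreeGroup.of i)⁻¹ else FreeGroup.of t)

lemma sgnHom_comp (i : Fin r) : (sgnHom r i).comp (sgnHom r i) = MonoidHom.id _ := by
  apply FreeGroup.ext_hom
  intro t
  rcases eq_or_ne t i with rfl | ht
  · simp [sgnHom]
  · simp [sgnHom, ht]

/-- Sign-flip automorphism of the free group. -/
def sgnAut (i : Fin r) : FreeGroup (Fin r) ≃* FreeGroup (Fin r) :=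
  MonoidHom.toMulEquiv (sgnHom r i) (sgnHom r i) (sgnHom_comp r i) (sgnHom_comp r i)

/-- The induced endomorphism on the abelianization. -/
def abHom (E : FreeGroup (Fin r) ≃* FreeGroup (Fin r)) :
    Abelianization (FreeGroup (Fin r)) →* Abelianization (FreeGroup (Fin r)) :=
  (MulEquiv.abelianizationCongr E).toMonoidHom

lemma abHom_of (E : FreeGroup (Fin r) ≃* FreeGroup (Fin r)) (g : FreeGroup (Fin r)) :
    abHom r E (Abelianization.of g) = Abelianization.of (E g) :=
  rfl

lemma abHom_trans (E1 E2 : FreeGroup (Fin r) ≃* FreeGroup (Fin r)) :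
    abHom r (E1.trans E2) = (abHom r E2).comp (abHom r E1) := by
  apply Abelianization.hom_ext
  apply FreeGroup.ext_hom
  intro i
  rfl

lemma abHom_refl : abHom r (MulEquiv.refl _) = MonoidHom.id _ := by
  apply Abelianization.hom_ext
  apply FreeGroup.ext_hom
  intro i
  rfl

lemma matOf_entry (φ : Abelianization (FreeGroup (Fin r)) →* Abelianization (FreeGroup (Fin r)))
    (p q : Fin r) :
    matOf r φ p q = Multiplicative.toAdd (coordsFn r (φ (xgen r q))) p := rfl

lemma transvection_entry (p q : Fin r) (c : ℤ) (a b : Fin r) :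
    Matrix.transvection p q c a b
      = (if a = b then 1 else 0) + (if a = p ∧ b = q then c else 0) := by
  rw [Matrix.transvection, Matrix.add_apply, Matrix.one_apply, Matrix.single]
  simp only [Matrix.of_apply]
  congr 1
  have h : (p = a ∧ q = b) ↔ (a = p ∧ b = q) := by
    constructor <;> rintro ⟨rfl, rfl⟩ <;> exact ⟨rfl, rfl⟩
  rw [if_congr h rfl rfl]

lemma sgn_entry (i a b : Fin r) :
    sgn i a b = if a = b then (if a = i then -1 else 1) else 0 := by
  rw [sgn, Matrix.diagonal_apply]

lemma matOf_tvAut (p q : Fin r) (c : ℤ) (hpq : p ≠ q) :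
    matOf r (abHom r (tvAut r p q c hpq)) = Matrix.transvection p q c := by
  ext a b
  have habq : (abHom r (tvAut r p q c hpq)) (xgen r b)
      = if b = q then xgen r q * (xgen r p) ^ c else xgen r b := by
    rw [xgen, abHom_of]
    rcases eq_or_ne b q with rfl | hb
    · rw [if_pos rfl]
      rw [show (tvAut r p b c hpq) (FreeGroup.of b)
          = FreeGroup.of b * (FreeGroup.of p) ^ c from tvHom_of_eq r p b c]
      rw [_root_.map_mul, _root_.map_zpow]
      rfl
    · rw [if_neg hb]
      rw [show (tvAut r p q c hpq) (FreeGroup.of b)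
          = FreeGroup.of b from tvHom_of_ne r p q c hb]
  rcases eq_or_ne b q with rfl | hb
  · rw [matOf_entry, habq, if_pos rfl, _root_.map_mul, _root_.map_zpow,
      coordsFn_xgen, coordsFn_xgen, toAdd_mul, toAdd_zpow,
      transvection_entry]
    simp only [toAdd_ofAdd, Pi.add_apply, Pi.smul_apply, smul_eq_mul]
    by_cases h1 : a = b <;> by_cases h2 : a = p <;>
      simp [Pi.single_apply, h1, h2]
  · rw [matOf_entry, habq, if_neg hb, coordsFn_xgen, transvection_entry]
    simp only [toAdd_ofAdd]
    by_cases h1 : a = b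
    · simp [Pi.single_apply, h1, hb]
    · simp [Pi.single_apply, h1, hb]

lemma matOf_sgnAut (i : Fin r) : matOf r (abHom r (sgnAut r i)) = sgn i := by
  ext a b
  have habq : (abHom r (sgnAut r i)) (xgen r b)
      = if b = i then (xgen r b)⁻¹ else xgen r b := by
    rw [xgen, abHom_of]
    rcases eq_or_ne b i with rfl | hb
    · rw [if_pos rfl]
      rw [show (sgnAut r b) (FreeGroup.of b) = (FreeGroup.of b)⁻¹ by simp [sgnAut, sgnHom]]
      rw [map_inv]
    · rw [if_neg hb]
      rw [show (sgnAut r i) (FreeGroup.of b) = FreeGroup.of b by simp [sgnAut, sgnHom, hb]]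
  rcases eq_or_ne b i with rfl | hb
  · rw [matOf_entry, habq, if_pos rfl, map_inv, coordsFn_xgen, toAdd_inv,
      sgn_entry]
    simp only [toAdd_ofAdd, Pi.neg_apply]
    by_cases h1 : a = b <;> simp [Pi.single_apply, h1]
  · rw [matOf_entry, habq, if_neg hb, coordsFn_xgen, sgn_entry]
    simp only [toAdd_ofAdd]
    by_cases h1 : a = b
    · subst h1; simp [Pi.single_apply, hb]
    · simp [Pi.single_apply, h1]

lemma lift_elem {B : Matrix (Fin r) (Fin r) ℤ} (h : Elem B) :
    ∃ E : FreeGroup (Fin r) ≃* FreeGroup (Fin r), matOf r (abHom r E) = B := by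
  rcases h with ⟨p, q, c, hpq, rfl⟩ | ⟨i, rfl⟩
  · exact ⟨tvAut r p q c hpq, matOf_tvAut r p q c hpq⟩
  · exact ⟨sgnAut r i, matOf_sgnAut r i⟩

lemma lift_list : ∀ L : List (Matrix (Fin r) (Fin r) ℤ), (∀ B ∈ L, Elem B) →
    ∃ E : FreeGroup (Fin r) ≃* FreeGroup (Fin r), matOf r (abHom r E) = L.prod := by
  intro L
  induction L with
  | nil =>
      intro _
      refine ⟨MulEquiv.refl _, ?_⟩
      rw [List.prod_nil, abHom_refl, matOf_id]
  | cons B T ih =>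
      intro h
      obtain ⟨ET, hET⟩ := ih (fun C hC => h C (by simp [hC]))
      obtain ⟨EB, hEB⟩ := lift_elem r (h B (by simp))
      refine ⟨ET.trans EB, ?_⟩
      rw [List.prod_cons, abHom_trans, matOf_comp, hET, hEB]

/-- Every automorphism of the abelianization of a free group lifts to an automorphism
of the free group. -/
theorem aut_lift (e : Abelianization (FreeGroup (Fin r)) ≃* Abelianization (FreeGroup (Fin r))) :
    ∃ E : FreeGroup (Fin r) ≃* FreeGroup (Fin r), abHom r E = e.toMonoidHom := by
  have hcomp1 : (e.toMonoidHom).comp e.symm.toMonoidHom = MonoidHom.id _ := by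
    apply MonoidHom.ext
    intro m
    exact e.apply_symm_apply m
  have hcomp2 : (e.symm.toMonoidHom).comp e.toMonoidHom = MonoidHom.id _ := by
    apply MonoidHom.ext
    intro m
    exact e.symm_apply_apply m
  have h2 : matOf r e.symm.toMonoidHom * matOf r e.toMonoidHom = 1 := by
    rw [← matOf_comp, hcomp2, matOf_id]
  have hdet : IsUnit (matOf r e.toMonoidHom).det :=
    Matrix.isUnit_det_of_left_inverse h2
  obtain ⟨L, hL, hLprod⟩ := elem_factorization (matOf r e.toMonoidHom) hdet
  obtain ⟨E, hE⟩ := lift_list r L hL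
  exact ⟨E, matOf_inj r (by rw [hE, hLprod])⟩

/-! ### Transfer to the free solvable group -/

section Solvable

variable (N : Subgroup (FreeGroup (Fin r))) [N.Normal]

/-- Projection between abelianizations. -/
noncomputable def abProj : Abelianization (FreeGroup (Fin r))
    →* Abelianization (FreeGroup (Fin r) ⧸ N) :=
  Abelianization.map (QuotientGroup.mk' N)

/-- Lift between abelianizations, when `N` is contained in the commutator subgroup. -/
noncomputable def abLift (hN : N ≤ commutator (FreeGroup (Fin r))) :
    Abelianization (FreeGroup (Fin r) ⧸ N) →* Abelianization (FreeGroup (Fin r)) :=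
  Abelianization.lift (QuotientGroup.lift N Abelianization.of
    (fun n hn => (QuotientGroup.eq_one_iff n).2 (hN hn)))

/-- The abelianization of `F/N` is isomorphic to the abelianization of `F` when
`N ≤ [F,F]`. -/
noncomputable def abEquiv (hN : N ≤ commutator (FreeGroup (Fin r))) :
    Abelianization (FreeGroup (Fin r) ⧸ N) ≃* Abelianization (FreeGroup (Fin r)) :=
  MonoidHom.toMulEquiv (abLift r N hN) (abProj r N)
    (by
      apply Abelianization.hom_ext
      apply QuotientGroup.monoidHom_ext
      apply MonoidHom.ext
      intro g
      rfl)
    (by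
      apply Abelianization.hom_ext
      apply MonoidHom.ext
      intro g
      rfl)

lemma abEquiv_of (hN : N ≤ commutator (FreeGroup (Fin r))) (g : FreeGroup (Fin r)) :
    abEquiv r N hN (Abelianization.of (QuotientGroup.mk g : FreeGroup (Fin r) ⧸ N))
      = Abelianization.of g := rfl

lemma abEquiv_symm_of (hN : N ≤ commutator (FreeGroup (Fin r))) (g : FreeGroup (Fin r)) :
    (abEquiv r N hN).symm (Abelianization.of g)
      = Abelianization.of (QuotientGroup.mk g : FreeGroup (Fin r) ⧸ N) := rfl

end Solvable

lemma derived_le_commutator (d : ℕ) :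
    derivedSeries (FreeGroup (Fin r)) (d + 1) ≤ commutator (FreeGroup (Fin r)) := by
  rw [derivedSeries_succ, commutator_def]
  exact Subgroup.commutator_mono le_top le_top

end LiftBasisAux


/-- Bases of the abelianization lift to bases: in the free group `F_r` and, more
generally, in the free solvable group `S_{r,d}`, every basis of the abelianization
(a free abelian group of rank `r`) is induced by a basis of the group. Here a basis is
a family obtained from the canonical basis by an automorphism. -/
theorem basis_of_abelianization_lifts (r d : ℕ) :
    (∀ a : Fin r → Abelianization (FreeGroup (Fin r)),
      (∃ e : Abelianization (FreeGroup (Fin r)) ≃* Abelianization (FreeGroup (Fin r)),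
        ∀ i, e (Abelianization.of (FreeGroup.of i)) = a i) →
      ∃ b : Fin r → FreeGroup (Fin r),
        (∃ e : FreeGroup (Fin r) ≃* FreeGroup (Fin r), ∀ i, e (FreeGroup.of i) = b i) ∧
        ∀ i, Abelianization.of (b i) = a i) ∧
    (∀ a : Fin r → Abelianization (FreeSolvable r d),
      (∃ e : Abelianization (FreeSolvable r d) ≃* Abelianization (FreeSolvable r d),
        ∀ i, e (Abelianization.of (FreeSolvable.gen r d i)) = a i) →
      ∃ b : Fin r → FreeSolvable r d,
        (∃ e : FreeSolvable r d ≃* FreeSolvable r d,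
          ∀ i, e (FreeSolvable.gen r d i) = b i) ∧
        ∀ i, Abelianization.of (b i) = a i) := by
  constructor
  · intro a ha
    obtain ⟨e, he⟩ := ha
    obtain ⟨E, hE⟩ := LiftBasisAux.aut_lift r e
    refine ⟨fun i => E (FreeGroup.of i), ⟨E, fun i => rfl⟩, ?_⟩
    intro i
    have h1 : Abelianization.of (E (FreeGroup.of i))
        = LiftBasisAux.abHom r E (Abelianization.of (FreeGroup.of i)) := rfl
    rw [h1, hE]
    exact he i
  · intro a ha
    obtain ⟨e, he⟩ := ha
    cases d with
    | zero =>
        haveI : Subsingleton (FreeSolvable r 0) :=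
          QuotientGroup.subsingleton_quotient_top
        refine ⟨fun i => FreeSolvable.gen r 0 i, ⟨MulEquiv.refl _, fun i => rfl⟩, ?_⟩
        intro i
        show Abelianization.of (FreeSolvable.gen r 0 i) = a i
        have hgen : FreeSolvable.gen r 0 i = 1 := Subsingleton.elim _ _
        rw [← he i, hgen]
        simp
    | succ d' =>
        have hN := LiftBasisAux.derived_le_commutator r d'
        set N := derivedSeries (FreeGroup (Fin r)) (d' + 1) with hNdef
        set β := LiftBasisAux.abEquiv r N hN with hβ
        set eF := (β.symm.trans e).trans β with heF
        obtain ⟨E, hE⟩ := LiftBasisAux.aut_lift r eF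
        have hmap : N.map (E : FreeGroup (Fin r) →* FreeGroup (Fin r)) = N :=
          map_derivedSeries_eq E.surjective (d' + 1)
        set Ebar := QuotientGroup.congr N N E hmap with hEbar
        refine ⟨fun i => Ebar (FreeSolvable.gen r (d' + 1) i), ⟨Ebar, fun i => rfl⟩, ?_⟩
        intro i
        show Abelianization.of (Ebar (FreeSolvable.gen r (d' + 1) i)) = a i
        apply β.injective
        have hb : Ebar (FreeSolvable.gen r (d' + 1) i)
            = (QuotientGroup.mk (E (FreeGroup.of i)) : FreeSolvable r (d' + 1)) := rfl
        rw [hb, show (Abelianization.of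
            (QuotientGroup.mk (E (FreeGroup.of i)) : FreeSolvable r (d' + 1))) =
            Abelianization.of (QuotientGroup.mk (E (FreeGroup.of i)) :
              FreeGroup (Fin r) ⧸ N) from rfl,
          LiftBasisAux.abEquiv_of r N hN (E (FreeGroup.of i))]
        have h2 : Abelianization.of (E (FreeGroup.of i))
            = LiftBasisAux.abHom r E (Abelianization.of (FreeGroup.of i)) := rfl
        rw [h2, hE]
        show β (e ((β.symm) (Abelianization.of (FreeGroup.of i)))) = β (a i)
        rw [LiftBasisAux.abEquiv_symm_of r N hN]
        rw [← he i]
        rfl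
end
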